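/- arXiv:2504.02816 — 8 statements merged into one kernel-verified Lean document; each statement's English description precedes it below -/
import Mathlib

section
/- Let G(A,B) be a bipartite graph satisfying the double Hall property with both sides A and B infinite. If every vertex of A has only finitely many neighbors, then A is countable. -/
/-- The set of vertices having at least two neighbors in `X`. -/
def N2 {V : Type*} (G : SimpleGraph V) (X : Set V) : Set V :=
  {v | ∃ x ∈ X, ∃ y ∈ X, x ≠ y ∧ G.Adj v x ∧ G.Adj v y}

/-- `G` is bipartite with sides `A` and `B`. -/
def BipartiteWith {V : Type*} (G : SimpleGraph V) (A B : Set V) : Prop :=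
  (∀ v, v ∈ A ∨ v ∈ B) ∧ Disjoint A B ∧
    ∀ ⦃x y⦄, G.Adj x y → (x ∈ A ∧ y ∈ B) ∨ (x ∈ B ∧ y ∈ A)

/-- The double Hall property for the side `A`. -/
def DHP {V : Type*} (G : SimpleGraph V) (A : Set V) : Prop :=
  2 ≤ Cardinal.mk A ∧
    ∀ X : Set V, X ⊆ A → 2 ≤ Cardinal.mk X → Cardinal.mk X ≤ Cardinal.mk (N2 G X)

/-- Key contradiction: a finite `X ⊆ A` of size `|F| + 2` whose pairwise common
neighborhoods all lie in `F` contradicts the double Hall property. -/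
lemma dhp_key {V : Type*} (G : SimpleGraph V) (A : Set V) (hdhp : DHP G A)
    (F X : Finset V) (hXA : ↑X ⊆ A) (hcard : X.card = F.card + 2)
    (hpair : ∀ x ∈ X, ∀ y ∈ X, x ≠ y → ∀ v, G.Adj v x → G.Adj v y → v ∈ F) :
    False := by
  have hsub : N2 G ↑X ⊆ ↑F := by
    rintro v ⟨x, hx, y, hy, hxy, hvx, hvy⟩
    exact hpair x hx y hy hxy v hvx hvy
  have hmkX : Cardinal.mk (↑(↑X : Set V)) = (X.card : Cardinal) := Cardinal.mk_coe_finset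
  have h2 : (2 : Cardinal) ≤ Cardinal.mk (↑(↑X : Set V)) := by
    rw [hmkX]
    exact_mod_cast (by omega : 2 ≤ X.card)
  have hle := hdhp.2 ↑X hXA h2
  have hle2 : Cardinal.mk (↑(N2 G ↑X)) ≤ Cardinal.mk (↑(↑F : Set V)) :=
    Cardinal.mk_le_mk_of_subset hsub
  have hmkF : Cardinal.mk (↑(↑F : Set V)) = (F.card : Cardinal) := Cardinal.mk_coe_finset
  have hch : (X.card : Cardinal) ≤ (F.card : Cardinal) := by
    rw [← hmkX, ← hmkF]; exact hle.trans hle2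
  have := Nat.cast_le.mp hch
  omega

/-- Greedy step: if every vertex outside `F` has only countably many neighbors in `Y`,
uncountability of `Y` is contradictory. -/
lemma dhp_greedy {V : Type*} (G : SimpleGraph V) (A : Set V) (hdhp : DHP G A)
    (hlf : ∀ v ∈ A, (G.neighborSet v).Finite)
    (F : Finset V) (Y : Set V) (hYA : Y ⊆ A) (hY : ¬ Y.Countable)
    (h : ∀ b ∉ F, {a ∈ Y | G.Adj b a}.Countable) : False := by
  classical
  have hclaim : ∀ m : ℕ, ∃ X : Finset V, ↑X ⊆ Y ∧ X.card = m ∧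
      ∀ x ∈ X, ∀ y ∈ X, x ≠ y → ∀ v, G.Adj v x → G.Adj v y → v ∈ F := by
    intro m
    induction m with
    | zero => exact ⟨∅, by simp, by simp, by simp⟩
    | succ m ih =>
      obtain ⟨X, hXY, hXcard, hXpair⟩ := ih
      set W : Set V := ⋃ x ∈ (↑X : Set V), ⋃ b ∈ G.neighborSet x \ ↑F,
        {a ∈ Y | G.Adj b a} with hW
      have hWc : W.Countable := by
        apply Set.Countable.biUnion (X.countable_toSet)
        intro x hx
        apply Set.Countable.biUnion (((hlf x (hYA (hXY hx))).diff).countable)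
        intro b hb
        exact h b hb.2
      have hne : (Y \ (W ∪ ↑X)).Nonempty := by
        rw [Set.nonempty_iff_ne_empty]
        intro hemp
        apply hY
        have : Y ⊆ W ∪ ↑X := by
          intro a ha
          by_contra hn
          exact (Set.eq_empty_iff_forall_notMem.mp hemp a) ⟨ha, hn⟩
        exact (hWc.union X.countable_toSet).mono this
      obtain ⟨a, haY, haW⟩ := hne
      have haX : a ∉ X := fun h => haW (Or.inr h)
      refine ⟨insert a X, ?_, ?_, ?_⟩
      · intro z hz
        rcases Finset.mem_insert.mp hz with rfl | hz
        · exact haY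
        · exact hXY hz
      · rw [Finset.card_insert_of_notMem haX, hXcard]
      · intro x hx y hy hxy v hvx hvy
        rcases Finset.mem_insert.mp hx with hxa | hx2
        · rcases Finset.mem_insert.mp hy with hya | hy2
          · exact absurd (hxa.trans hya.symm) hxy
          · by_contra hvF
            apply haW
            left
            rw [hxa] at hvx
            refine Set.mem_biUnion (show y ∈ (↑X : Set V) from hy2) ?_
            refine Set.mem_biUnion (show v ∈ G.neighborSet y \ ↑F from ⟨hvy.symm, hvF⟩) ?_
            exact ⟨haY, hvx⟩
        · rcases Finset.mem_insert.mp hy with hya | hy2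
          · by_contra hvF
            apply haW
            left
            rw [hya] at hvy
            refine Set.mem_biUnion (show x ∈ (↑X : Set V) from hx2) ?_
            refine Set.mem_biUnion (show v ∈ G.neighborSet x \ ↑F from ⟨hvx.symm, hvF⟩) ?_
            exact ⟨haY, hvy⟩
          · exact hXpair x hx2 y hy2 hxy v hvx hvy
  obtain ⟨X, hXY, hXcard, hXpair⟩ := hclaim (F.card + 2)
  exact dhp_key G A hdhp F X (hXY.trans hYA) hXcard hXpair

lemma dhp_main {V : Type*} (G : SimpleGraph V) (A : Set V) (hdhp : DHP G A)
    (hlf : ∀ v ∈ A, (G.neighborSet v).Finite) :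
    ∀ n : ℕ, ∀ F : Finset V, ∀ Y : Set V, Y ⊆ A → ¬ Y.Countable →
      (∀ a ∈ Y, (G.neighborSet a \ ↑F).ncard ≤ n) → False := by
  classical
  intro n
  induction n with
  | zero =>
    intro F Y hYA hY hbound
    refine dhp_greedy G A hdhp hlf F Y hYA hY ?_
    intro b hbF
    have : {a ∈ Y | G.Adj b a} ⊆ (∅ : Set V) := by
      intro a ⟨haY, hadj⟩
      have hfin : (G.neighborSet a \ ↑F).Finite := ((hlf a (hYA haY)).diff)
      have hmem : b ∈ G.neighborSet a \ ↑F := ⟨hadj.symm, hbF⟩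
      have := Set.ncard_pos hfin |>.mpr ⟨b, hmem⟩
      have := hbound a haY
      omega
    exact Set.Countable.mono this Set.countable_empty
  | succ n ih =>
    intro F Y hYA hY hbound
    by_cases hb : ∃ b, b ∉ F ∧ ¬ {a ∈ Y | G.Adj b a}.Countable
    · obtain ⟨b, hbF, hbY⟩ := hb
      refine ih (insert b F) {a ∈ Y | G.Adj b a} (fun a ha => hYA ha.1) hbY ?_
      intro a ⟨haY, hadj⟩
      have hfin : (G.neighborSet a \ ↑F).Finite := ((hlf a (hYA haY)).diff)
      have hmem : b ∈ G.neighborSet a \ ↑F := ⟨hadj.symm, hbF⟩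
      have hsub : G.neighborSet a \ ↑(insert b F) ⊆ (G.neighborSet a \ ↑F) \ {b} := by
        intro v hv
        simp only [Finset.coe_insert, Set.mem_diff, Set.mem_insert_iff,
          Set.mem_singleton_iff] at hv ⊢
        tauto
      have h1 : ((G.neighborSet a \ ↑F) \ {b}).ncard < (G.neighborSet a \ ↑F).ncard :=
        Set.ncard_diff_singleton_lt_of_mem hmem hfin
      have h2 : (G.neighborSet a \ ↑(insert b F)).ncard ≤
          ((G.neighborSet a \ ↑F) \ {b}).ncard :=
        Set.ncard_le_ncard hsub (hfin.diff)
      have := hbound a haY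
      omega
    · push_neg at hb
      exact dhp_greedy G A hdhp hlf F Y hYA hY hb

theorem stmt1 {V : Type*} (G : SimpleGraph V) (A B : Set V)
    (hbip : BipartiteWith G A B) (hdhp : DHP G A)
    (hA : A.Infinite) (hB : B.Infinite)
    (hlf : ∀ v ∈ A, (G.neighborSet v).Finite) :
    A.Countable := by
  classical
  by_contra hA'
  by_cases hn : ∃ n : ℕ, ¬ {a ∈ A | (G.neighborSet a).ncard ≤ n}.Countable
  · obtain ⟨n, hn⟩ := hn
    refine dhp_main G A hdhp hlf n ∅ _ (fun a ha => ha.1) hn ?_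
    intro a ⟨haA, hcard⟩
    simpa using hcard
  · push_neg at hn
    apply hA'
    have hsub : A ⊆ ⋃ n : ℕ, {a ∈ A | (G.neighborSet a).ncard ≤ n} := by
      intro a ha
      exact Set.mem_iUnion.mpr ⟨(G.neighborSet a).ncard, ha, le_refl _⟩
    exact (Set.countable_iUnion hn).mono hsub
end

section
/- There exists a countably infinite bipartite graph Γ(S,R) satisfying the double Hall property, whose side S is locally finite (every vertex of S has finite degree), such that every subgraph H of Γ in which every vertex has degree exactly 2 and whose vertex set contains all of S has infinitely many connected components. -/
def DegEq2 {V : Type*} {G : SimpleGraph V} (H : G.Subgraph) (v : V) : Prop :=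
  ∃ a b, a ≠ b ∧ H.neighborSet v = {a, b}

def DegLe2 {V : Type*} {G : SimpleGraph V} (H : G.Subgraph) (v : V) : Prop :=
  ∀ a ∈ H.neighborSet v, ∀ b ∈ H.neighborSet v, ∀ c ∈ H.neighborSet v,
    a = b ∨ a = c ∨ b = c

def DegEq1 {V : Type*} {G : SimpleGraph V} (H : G.Subgraph) (v : V) : Prop :=
  ∃ a, H.neighborSet v = {a}



namespace DHPx

/-- Vertex type: left = tree nodes (S side), right = hubs (R side). -/
abbrev V : Type := List Bool ⊕ (List Bool × ℕ)

/-- one-directional adjacency relation -/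
def rel (u v : V) : Prop :=
  ∃ s t i, u = Sum.inl s ∧ v = Sum.inr (t, i) ∧ t <+: s ∧ i < 2 ^ (t.length + 2)

def G : SimpleGraph V where
  Adj u v := rel u v ∨ rel v u
  symm := ⟨fun u v h => Or.symm h⟩
  loopless := ⟨by
    rintro v (⟨s, t, i, h1, h2, _⟩ | ⟨s, t, i, h1, h2, _⟩) <;> (rw [h1] at h2; simp at h2)⟩

def S : Set V := Set.range Sum.inl
def R : Set V := Set.range Sum.inr

lemma adj_iff {u v : V} : G.Adj u v ↔ rel u v ∨ rel v u := Iff.rfl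

lemma adj_inl_inr {s t : List Bool} {i : ℕ} :
    G.Adj (Sum.inl s) (Sum.inr (t, i)) ↔ (t <+: s ∧ i < 2 ^ (t.length + 2)) := by
  constructor
  · rintro (⟨s', t', i', hs, ht, h⟩ | ⟨s', t', i', hs, ht, h⟩)
    · cases hs; cases ht; exact h
    · simp at hs
  · intro h; exact Or.inl ⟨s, t, i, rfl, rfl, h⟩

lemma adj_inr_inl {s t : List Bool} {i : ℕ} :
    G.Adj (Sum.inr (t, i)) (Sum.inl s) ↔ (t <+: s ∧ i < 2 ^ (t.length + 2)) := by
  rw [show (G.Adj (Sum.inr (t,i)) (Sum.inl s)) ↔ G.Adj (Sum.inl s) (Sum.inr (t,i)) from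
    ⟨fun h => h.symm, fun h => h.symm⟩, adj_inl_inr]

lemma not_adj_inl_inl {s s' : List Bool} : ¬ G.Adj (Sum.inl s) (Sum.inl s') := by
  rintro (⟨a, b, c, h1, h2, _⟩ | ⟨a, b, c, h1, h2, _⟩) <;> simp_all

lemma not_adj_inr_inr {p p' : List Bool × ℕ} : ¬ G.Adj (Sum.inr p) (Sum.inr p') := by
  rintro (⟨a, b, c, h1, h2, _⟩ | ⟨a, b, c, h1, h2, _⟩) <;> simp_all

lemma bip : BipartiteWith G S R := by
  refine ⟨fun v => ?_, ?_, fun x y h => ?_⟩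
  · cases v with
    | inl s => exact Or.inl ⟨s, rfl⟩
    | inr p => exact Or.inr ⟨p, rfl⟩
  · rw [Set.disjoint_left]; rintro v ⟨s, rfl⟩ ⟨p, hp⟩; simp at hp
  · cases x with
    | inl s => cases y with
      | inl s' => exact absurd h not_adj_inl_inl
      | inr p => exact Or.inl ⟨⟨s, rfl⟩, ⟨p, rfl⟩⟩
    | inr p => cases y with
      | inl s' => exact Or.inr ⟨⟨p, rfl⟩, ⟨s', rfl⟩⟩
      | inr p' => exact absurd h not_adj_inr_inr

instance : Infinite (List Bool) :=
  Infinite.of_injective (fun n => List.replicate n true)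
    (fun a b h => by simpa using congrArg List.length h)

instance : Infinite V := Infinite.of_injective Sum.inl Sum.inl_injective

/-- lists of bounded length form a finite set -/
lemma finite_length_lt : ∀ n : ℕ, {l : List Bool | l.length < n}.Finite := by
  intro n
  induction n with
  | zero => simp
  | succ n ih =>
    have : {l : List Bool | l.length < n + 1} ⊆
        insert [] ((fun p : Bool × List Bool => p.1 :: p.2) ''
          (Set.univ ×ˢ {l : List Bool | l.length < n})) := by
      intro l hl
      cases l with
      | nil => exact Set.mem_insert _ _
      | cons b l' =>
        refine Set.mem_insert_of_mem _ ⟨(b, l'), ⟨trivial, ?_⟩, rfl⟩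
        simpa using Nat.lt_of_succ_lt_succ hl
    exact Set.Finite.subset (((Set.finite_univ.prod ih).image _).insert _) this

lemma locfin : ∀ v ∈ S, (G.neighborSet v).Finite := by
  rintro v ⟨s, rfl⟩
  have hsub : G.neighborSet (Sum.inl s) ⊆
      (fun p : List Bool × ℕ => Sum.inr p) ''
        ({l : List Bool | l.length < s.length + 1} ×ˢ {i : ℕ | i < 2 ^ (s.length + 2)}) := by
    intro u hu
    cases u with
    | inl s' => exact absurd hu not_adj_inl_inl
    | inr p =>
      obtain ⟨t, i⟩ := p
      rw [SimpleGraph.mem_neighborSet, adj_inl_inr] at hu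
      refine ⟨(t, i), ⟨?_, ?_⟩, rfl⟩
      · exact Nat.lt_succ_of_le hu.1.length_le
      · exact lt_of_lt_of_le hu.2 (Nat.pow_le_pow_right (by norm_num)
          (by have := hu.1.length_le; omega))
  exact Set.Finite.subset (((finite_length_lt _).prod (Set.finite_Iio _)).image _) hsub

end DHPx

namespace DHPx

/-- longest common prefix -/
def lcp : List Bool → List Bool → List Bool
  | a :: s, b :: t => if a = b then a :: lcp s t else []
  | _, _ => []

lemma lcp_prefix_left : ∀ x y : List Bool, lcp x y <+: x := by
  intro x
  induction x with
  | nil => intro y; cases y <;> simp [lcp]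
  | cons a s ih =>
    intro y
    cases y with
    | nil => simp [lcp]
    | cons b t =>
      by_cases h : a = b
      · simpa [lcp, h] using ih t
      · simp [lcp, h]

lemma lcp_prefix_right : ∀ x y : List Bool, lcp x y <+: y := by
  intro x
  induction x with
  | nil => intro y; cases y <;> simp [lcp]
  | cons a s ih =>
    intro y
    cases y with
    | nil => simp [lcp]
    | cons b t =>
      by_cases h : a = b
      · subst h; simpa [lcp] using ih t
      · simp [lcp, h]

lemma length_le_lcp : ∀ (p x y : List Bool), p <+: x → p <+: y →
    p.length ≤ (lcp x y).length := by
  intro p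
  induction p with
  | nil => simp
  | cons a q ih =>
    intro x y hx hy
    obtain ⟨x', rfl⟩ := hx
    obtain ⟨y', hy'⟩ := hy
    cases y with
    | nil => simp at hy'
    | cons b t =>
      have hab : a = b := by
        have := congrArg (fun l => l.head?) hy'
        simpa using this
      subst hab
      have htq : q <+: t := by
        refine ⟨y', ?_⟩
        have := congrArg List.tail hy'
        simpa using this
      simpa [lcp] using ih (q ++ x') t ⟨x', rfl⟩ htq

/-- binary encoding of a list -/
def enc : List Bool → ℕ
  | [] => 0
  | b :: l => (cond b 1 0) + 2 * enc l

lemma enc_lt : ∀ l : List Bool, enc l < 2 ^ l.length := by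
  intro l
  induction l with
  | nil => simp [enc]
  | cons b l ih => cases b <;> (simp [enc, pow_succ]; omega)

lemma enc_inj : ∀ l₁ l₂ : List Bool, l₁.length = l₂.length → enc l₁ = enc l₂ → l₁ = l₂ := by
  intro l₁
  induction l₁ with
  | nil => intro l₂ h _; cases l₂ <;> simp_all
  | cons b l ih =>
    intro l₂ hlen henc
    cases l₂ with
    | nil => simp at hlen
    | cons b' l' =>
      have hb : b = b' := by cases b <;> cases b' <;> simp_all [enc] <;> omega
      subst hb
      have : enc l = enc l' := by cases b <;> (simp [enc] at henc; omega)
      rw [ih l' (by simpa using hlen) this]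

def code (l : List Bool) : ℕ := 2 ^ l.length + enc l

lemma code_lt {l : List Bool} {L : ℕ} (h : l.length ≤ L) : code l < 2 ^ (L + 1) := by
  have h1 := enc_lt l
  have h2 : (2:ℕ) ^ l.length ≤ 2 ^ L := Nat.pow_le_pow_right (by norm_num) h
  have h3 : (2:ℕ) ^ (L+1) = 2 ^ L + 2 ^ L := by ring
  unfold code
  omega

lemma code_inj : ∀ l₁ l₂ : List Bool, code l₁ = code l₂ → l₁ = l₂ := by
  have key : ∀ l₁ l₂ : List Bool, l₁.length < l₂.length → code l₁ ≠ code l₂ := by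
    intro l₁ l₂ h
    have h1 := enc_lt l₁
    have h2 : (2:ℕ) ^ (l₁.length + 1) ≤ 2 ^ l₂.length :=
      Nat.pow_le_pow_right (by norm_num) h
    have h3 : (2:ℕ) ^ (l₁.length + 1) = 2 ^ l₁.length + 2 ^ l₁.length := by ring
    unfold code
    have h4 : 0 ≤ enc l₂ := Nat.zero_le _
    omega
  intro l₁ l₂ h
  rcases lt_trichotomy l₁.length l₂.length with hl | hl | hl
  · exact absurd h (key _ _ hl)
  · exact enc_inj _ _ hl (by unfold code at h; rw [hl] at h; omega)
  · exact absurd h.symm (key _ _ hl)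

end DHPx

namespace DHPx

lemma dhp : DHP G S := by
  constructor
  · rw [Cardinal.two_le_iff]
    refine ⟨⟨Sum.inl [], ⟨[], rfl⟩⟩, ⟨Sum.inl [true], ⟨[true], rfl⟩⟩, ?_⟩
    simp [Subtype.ext_iff]
  · intro X hXS hX2
    obtain ⟨⟨u, hu⟩, ⟨v, hv⟩, huv⟩ := Cardinal.two_le_iff.mp hX2
    obtain ⟨a, rfl⟩ := hXS hu
    obtain ⟨b, rfl⟩ := hXS hv
    have hab : a ≠ b := fun h => huv (by simp [h])
    set X' : Set (List Bool) := {l | Sum.inl l ∈ X} with hX'def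
    by_cases hfin : X.Finite
    · -- finite case
      have hX'fin : X'.Finite :=
        Set.Finite.preimage (Set.injOn_of_injective Sum.inl_injective) hfin
      set Fs := hX'fin.toFinset with hFs
      have haF : a ∈ Fs := hX'fin.mem_toFinset.mpr hu
      have hbF : b ∈ Fs := hX'fin.mem_toFinset.mpr hv
      have habf : (a, b) ∈ Fs.offDiag := Finset.mem_offDiag.mpr ⟨haF, hbF, hab⟩
      set img := Fs.offDiag.image (fun p => (lcp p.1 p.2).length) with himg
      have hne : img.Nonempty := ⟨_, Finset.mem_image_of_mem _ habf⟩
      set D := img.max' hne with hD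
      obtain ⟨p, hp, hpD⟩ := Finset.mem_image.mp (img.max'_mem hne)
      obtain ⟨x₀, y₀⟩ := p
      obtain ⟨hx₀F, hy₀F, hxy₀⟩ := Finset.mem_offDiag.mp hp
      have hx₀ : Sum.inl x₀ ∈ X := hX'fin.mem_toFinset.mp hx₀F
      have hy₀ : Sum.inl y₀ ∈ X := hX'fin.mem_toFinset.mp hy₀F
      have hDmax : ∀ x y, x ∈ X' → y ∈ X' → x ≠ y → (lcp x y).length ≤ D := by
        intro x y hx hy hxy
        have hmem : ((x, y) : List Bool × List Bool) ∈ Fs.offDiag :=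
          Finset.mem_offDiag.mpr ⟨hX'fin.mem_toFinset.mpr hx, hX'fin.mem_toFinset.mpr hy, hxy⟩
        exact Finset.le_max' img _ (Finset.mem_image_of_mem _ hmem)
      set t0 := lcp x₀ y₀ with ht0
      have ht0len : t0.length = D := hpD
      set ext : V → List Bool := Sum.elim id (fun _ => []) with hextdef
      have hext : ∀ w : ↥X, (w : V) = Sum.inl (ext (w : V)) := by
        rintro ⟨w, hw⟩
        obtain ⟨l, rfl⟩ := hXS hw
        rfl
      have hextX : ∀ w : ↥X, ext (w : V) ∈ X' := by
        intro w
        have : Sum.inl (ext (w:V)) ∈ X := by rw [← hext w]; exact w.2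
        exact this
      have hmemN2 : ∀ w : ↥X, Sum.inr (t0, code ((ext (w:V)).take (D+1))) ∈ N2 G X := by
        intro w
        have hcode : code ((ext (w:V)).take (D+1)) < 2 ^ (t0.length + 2) := by
          rw [ht0len]
          have : ((ext (w:V)).take (D+1)).length ≤ D + 1 := by
            rw [List.length_take]; omega
          simpa [show D + 2 = (D+1)+1 by omega] using code_lt this
        refine ⟨Sum.inl x₀, hx₀, Sum.inl y₀, hy₀, by simpa using hxy₀, ?_, ?_⟩
        · exact adj_inr_inl.mpr ⟨lcp_prefix_left _ _, hcode⟩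
        · exact adj_inr_inl.mpr ⟨lcp_prefix_right _ _, hcode⟩
      set Ψ : ↥X → ↥(N2 G X) := fun w => ⟨_, hmemN2 w⟩ with hΨ
      have hΨinj : Function.Injective Ψ := by
        intro w w' h
        have hcode : code ((ext (w:V)).take (D+1)) = code ((ext (w':V)).take (D+1)) := by
          have := congrArg Subtype.val h
          simpa [hΨ] using this
        have htake := code_inj _ _ hcode
        have hexteq : ext (w:V) = ext (w':V) := by
          by_contra hne2
          by_cases hlen : (ext (w:V)).length ≤ D
          · have h1 : (ext (w:V)).take (D+1) = ext (w:V) :=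
              List.take_of_length_le (by omega)
            have h2 : ((ext (w':V)).take (D+1)).length = (ext (w:V)).length := by
              rw [← htake, h1]
            have h3 : (ext (w':V)).length ≤ D := by
              rw [List.length_take] at h2; omega
            have h4 : (ext (w':V)).take (D+1) = ext (w':V) :=
              List.take_of_length_le (by omega)
            exact hne2 (by rw [← h1, htake, h4])
          · by_cases hlen' : (ext (w':V)).length ≤ D
            · have h1 : (ext (w':V)).take (D+1) = ext (w':V) :=
                List.take_of_length_le (by omega)
              have h2 : ((ext (w:V)).take (D+1)).length = (ext (w':V)).length := by
                rw [htake, h1]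
              have h3 : (ext (w:V)).length ≤ D := by
                rw [List.length_take] at h2; omega
              exact absurd h3 hlen
            · have hp1 : (ext (w:V)).take (D+1) <+: ext (w:V) := List.take_prefix _ _
              have hp2 : (ext (w:V)).take (D+1) <+: ext (w':V) := by
                rw [htake]; exact List.take_prefix _ _
              have hlenp : ((ext (w:V)).take (D+1)).length = D+1 := by
                rw [List.length_take]; omega
              have hle := length_le_lcp _ _ _ hp1 hp2
              have hmax := hDmax _ _ (hextX w) (hextX w') hne2
              omega
        exact Subtype.ext (by rw [hext w, hext w', hexteq])
      exact Cardinal.mk_le_of_injective hΨinj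
    · -- infinite case
      have hXinf : X.Infinite := hfin
      have hX'inf : X'.Infinite := by
        intro hf
        apply hXinf
        have hsub : X ⊆ Sum.inl '' X' := by
          rintro w hw
          obtain ⟨l, rfl⟩ := hXS hw
          exact ⟨l, hw, rfl⟩
        exact (hf.image _).subset hsub
      have hstep : ∀ n : ℕ, ∃ t : List Bool, t.length = n ∧ Sum.inr (t, 0) ∈ N2 G X := by
        intro n
        have hXn : {l | l ∈ X' ∧ n ≤ l.length}.Infinite := by
          intro hf
          apply hX'inf
          have hsub : X' ⊆ {l | l ∈ X' ∧ n ≤ l.length} ∪ {l : List Bool | l.length < n} := by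
            intro l hl
            by_cases h : n ≤ l.length
            · exact Or.inl ⟨hl, h⟩
            · exact Or.inr (by simp only [Set.mem_setOf_eq]; omega)
          exact ((hf.union (finite_length_lt n)).subset hsub)
        obtain ⟨x, hx, y, hy, hxy, hfxy⟩ :=
          hXn.exists_ne_map_eq_of_mapsTo (f := fun l => l.take n)
            (fun l hl => by
              simp only [Set.mem_setOf_eq, List.length_take]
              omega)
            (finite_length_lt (n+1))
        refine ⟨x.take n, by rw [List.length_take]; have := hx.2; omega, ?_⟩
        refine ⟨Sum.inl x, hx.1, Sum.inl y, hy.1, by simpa using hxy, ?_, ?_⟩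
        · exact adj_inr_inl.mpr ⟨List.take_prefix _ _, by positivity⟩
        · refine adj_inr_inl.mpr ⟨?_, by positivity⟩
          rw [hfxy]; exact List.take_prefix _ _
      choose T hT1 hT2 using hstep
      have hN2inf : (N2 G X).Infinite := by
        refine Set.infinite_of_injective_forall_mem
          (f := fun n => (Sum.inr (T n, 0) : V)) ?_ hT2
        intro n m hnm
        have hlen : (T n).length = (T m).length := by
          have := congrArg (fun w : V => (Sum.elim (fun _ => 0) (fun p => p.1.length)) w) hnm
          simpa using this
        rw [hT1, hT1] at hlen
        exact hlen
      have h1 : Cardinal.mk X ≤ Cardinal.aleph0 := Cardinal.mk_le_aleph0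
      have h2 : Cardinal.aleph0 ≤ Cardinal.mk (N2 G X) := by
        haveI := hN2inf.to_subtype
        exact Cardinal.aleph0_le_mk _
      exact h1.trans h2

end DHPx

namespace DHPx

/-- generic two-step walk iteration -/
def wkF {α : Type*} (nx : α → α → α) (v₀ v₁ : α) (n : ℕ) : α :=
  ((fun q : α × α => (q.2, nx q.2 q.1))^[n] (v₀, v₁)).1

lemma wkF_zero {α : Type*} (nx : α → α → α) (v₀ v₁ : α) : wkF nx v₀ v₁ 0 = v₀ := rfl

lemma wkF_snd {α : Type*} (nx : α → α → α) (v₀ v₁ : α) (n : ℕ) :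
    ((fun q : α × α => (q.2, nx q.2 q.1))^[n] (v₀, v₁)).2 = wkF nx v₀ v₁ (n + 1) := by
  unfold wkF
  rw [Function.iterate_succ_apply']

lemma wkF_one {α : Type*} (nx : α → α → α) (v₀ v₁ : α) : wkF nx v₀ v₁ 1 = v₁ := by
  rw [← wkF_snd]
  rfl

lemma wkF_succ_succ {α : Type*} (nx : α → α → α) (v₀ v₁ : α) (n : ℕ) :
    wkF nx v₀ v₁ (n + 2) = nx (wkF nx v₀ v₁ (n + 1)) (wkF nx v₀ v₁ n) := by
  have h1 : wkF nx v₀ v₁ (n + 2) =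
      ((fun q : ((α × α)) => (q.2, nx q.2 q.1))^[n+1] (v₀, v₁)).2 := (wkF_snd nx v₀ v₁ (n+1)).symm
  rw [h1, Function.iterate_succ_apply']
  show nx (((fun q : α × α => (q.2, nx q.2 q.1))^[n] (v₀, v₁)).2)
      (((fun q : α × α => (q.2, nx q.2 q.1))^[n] (v₀, v₁)).1) = _
  rw [wkF_snd]
  rfl

end DHPx

namespace DHPx

theorem main (H : G.Subgraph) (hS : S ⊆ H.verts) (hdeg : ∀ v ∈ H.verts, DegEq2 H v) :
    Infinite H.coe.ConnectedComponent := by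
  classical
  by_contra hinf
  rw [not_infinite_iff_finite] at hinf
  haveI : Finite H.coe.ConnectedComponent := hinf
  haveI : Fintype H.coe.ConnectedComponent := Fintype.ofFinite _
  set c := Fintype.card H.coe.ConnectedComponent with hc
  set δ := 2 * c + 2 with hδ
  have hmem : ∀ l : List Bool, Sum.inl l ∈ H.verts := fun l => hS ⟨l, rfl⟩
  set comp : List Bool → H.coe.ConnectedComponent :=
    fun l => H.coe.connectedComponentMk ⟨Sum.inl l, hmem l⟩ with hcomp
  -- choice of the two neighbours of each vertex of H
  have hdeg' : ∀ v : V, ∃ a b : V, v ∈ H.verts → (a ≠ b ∧ H.neighborSet v = {a, b}) := by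
    intro v
    by_cases h : v ∈ H.verts
    · obtain ⟨a, b, hab⟩ := hdeg v h
      exact ⟨a, b, fun _ => hab⟩
    · exact ⟨v, v, fun hv => absurd hv h⟩
  choose A B hAB using hdeg'
  have hadjA : ∀ v, v ∈ H.verts → H.Adj v (A v) := by
    intro v hv
    have h : A v ∈ H.neighborSet v := by
      rw [(hAB v hv).2]; exact Set.mem_insert _ _
    exact h
  have hadjB : ∀ v, v ∈ H.verts → H.Adj v (B v) := by
    intro v hv
    have h : B v ∈ H.neighborSet v := by
      rw [(hAB v hv).2]; exact Set.mem_insert_of_mem _ rfl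
    exact h
  -- infinite fibres: each subtree contains infinitely many vertices of one component
  have hfib : ∀ t : List Bool, ∃ κ : H.coe.ConnectedComponent,
      {l : List Bool | t <+: l ∧ comp l = κ}.Infinite := by
    intro t
    by_contra hcon
    push_neg at hcon
    have hfin2 : ∀ κ, {l | t <+: l ∧ comp l = κ}.Finite := by
      intro κ; have := hcon κ; exact this
    have hbig : {l : List Bool | t <+: l}.Infinite := by
      refine Set.infinite_of_injective_forall_mem
        (f := fun n => t ++ List.replicate n true) ?_ ?_
      · intro n m h
        have := congrArg List.length h
        simpa using this
      · intro n; exact ⟨_, rfl⟩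
    apply hbig
    have heq : {l : List Bool | t <+: l} =
        ⋃ κ ∈ (Set.univ : Set H.coe.ConnectedComponent), {l | t <+: l ∧ comp l = κ} := by
      ext l
      simp only [Set.mem_setOf_eq, Set.mem_iUnion, Set.mem_univ, exists_prop, true_and]
      exact ⟨fun h => ⟨comp l, h, rfl⟩, fun ⟨κ, h, _⟩ => h⟩
    rw [heq]
    exact Set.Finite.biUnion Set.finite_univ (fun κ _ => hfin2 κ)
  choose ψ hψ using hfib
  -- pigeonhole: some component has three subtrees at depth δ
  have hcard2 : (Finset.univ : Finset H.coe.ConnectedComponent).card * 2 <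
      (Finset.univ : Finset (Fin δ → Bool)).card := by
    rw [Finset.card_univ, Finset.card_univ, Fintype.card_fun, Fintype.card_bool,
      Fintype.card_fin]
    calc c * 2 < 2 * c + 2 := by omega
    _ < 2 ^ (2 * c + 2) := Nat.lt_two_pow_self
  obtain ⟨κ, -, hκ⟩ := Finset.exists_lt_card_fiber_of_mul_lt_card_of_maps_to
    (f := fun f : Fin δ → Bool => ψ (List.ofFn f))
    (fun a _ => Finset.mem_univ _) hcard2
  rw [Finset.two_lt_card_iff] at hκ
  obtain ⟨f₁, f₂, f₃, hf₁, hf₂, hf₃, h12, h13, h23⟩ := hκ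
  simp only [Finset.mem_filter, Finset.mem_univ, true_and] at hf₁ hf₂ hf₃
  have ht12 : List.ofFn f₁ ≠ List.ofFn f₂ := fun h => h12 (List.ofFn_injective h)
  have ht13 : List.ofFn f₁ ≠ List.ofFn f₃ := fun h => h13 (List.ofFn_injective h)
  have ht23 : List.ofFn f₂ ≠ List.ofFn f₃ := fun h => h23 (List.ofFn_injective h)
  have hM₁ : {l | List.ofFn f₁ <+: l ∧ comp l = κ}.Infinite := hf₁ ▸ hψ (List.ofFn f₁)
  have hM₂ : {l | List.ofFn f₂ <+: l ∧ comp l = κ}.Infinite := hf₂ ▸ hψ (List.ofFn f₂)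
  have hM₃ : {l | List.ofFn f₃ <+: l ∧ comp l = κ}.Infinite := hf₃ ▸ hψ (List.ofFn f₃)
  -- base vertex
  obtain ⟨l₀, hl₀⟩ := hM₁.nonempty
  set v₀ : V := Sum.inl l₀ with hv₀def
  have hv₀ : v₀ ∈ H.verts := hmem l₀
  -- the walk
  set nxt : V → V → V := fun cur prev => if prev = A cur then B cur else A cur with hnxt
  set wk : V → ℕ → V := fun v₁ => wkF nxt v₀ v₁ with hwkdef
  have hwadj : ∀ v₁, H.Adj v₀ v₁ → ∀ n, H.Adj (wk v₁ n) (wk v₁ (n + 1)) := by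
    intro v₁ h0 n
    induction n with
    | zero =>
      have h1 : H.Adj (wkF nxt v₀ v₁ 0) (wkF nxt v₀ v₁ 1) := by
        rw [wkF_zero, wkF_one]; exact h0
      exact h1
    | succ n ih =>
      have hc : wk v₁ (n + 1) ∈ H.verts := ih.snd_mem
      have hr : wk v₁ (n + 2) = nxt (wk v₁ (n + 1)) (wk v₁ n) :=
        wkF_succ_succ nxt v₀ v₁ n
      rw [show n + 1 + 1 = n + 2 from rfl, hr, hnxt]
      dsimp only
      split
      · exact hadjB _ hc
      · exact hadjA _ hc
  have hwmem : ∀ v₁, H.Adj v₀ v₁ → ∀ n,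
      wk v₁ n = A (wk v₁ (n + 1)) ∨ wk v₁ n = B (wk v₁ (n + 1)) := by
    intro v₁ h0 n
    have hadj := (hwadj v₁ h0 n).symm
    have hc : wk v₁ (n + 1) ∈ H.verts := (hwadj v₁ h0 n).snd_mem
    have hmem2 : wk v₁ n ∈ H.neighborSet (wk v₁ (n + 1)) := hadj
    rw [(hAB _ hc).2] at hmem2
    simpa using hmem2
  have hwnbr : ∀ v₁, H.Adj v₀ v₁ → ∀ n,
      H.neighborSet (wk v₁ (n + 1)) = {wk v₁ n, wk v₁ (n + 2)} := by
    intro v₁ h0 n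
    have hc : wk v₁ (n + 1) ∈ H.verts := (hwadj v₁ h0 n).snd_mem
    obtain ⟨hne, hset⟩ := hAB _ hc
    have hr : wk v₁ (n + 2) = nxt (wk v₁ (n + 1)) (wk v₁ n) :=
      wkF_succ_succ nxt v₀ v₁ n
    rcases hwmem v₁ h0 n with h | h
    · rw [hr, hnxt]; dsimp only
      rw [if_pos h, hset, ← h]
    · have hne2 : wk v₁ n ≠ A (wk v₁ (n + 1)) := by
        intro hcon; exact hne (hcon.symm.trans h)
      rw [hr, hnxt]; dsimp only
      rw [if_neg hne2, hset, ← h, Set.pair_comm]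
  -- coverage of the component of v₀ by the two walks
  set Wset : Set V := Set.range (wk (A v₀)) ∪ Set.range (wk (B v₀)) with hWsetdef
  have hA0 : H.Adj v₀ (A v₀) := hadjA _ hv₀
  have hB0 : H.Adj v₀ (B v₀) := hadjB _ hv₀
  have hwk0 : ∀ v₁, wk v₁ 0 = v₀ := fun v₁ => wkF_zero nxt v₀ v₁
  have hwk1 : ∀ v₁, wk v₁ 1 = v₁ := fun v₁ => wkF_one nxt v₀ v₁
  have hcl : ∀ v₁, H.Adj v₀ v₁ → Set.range (wk v₁) ⊆ Wset →
      ∀ n x, H.Adj (wk v₁ n) x → x ∈ Wset := by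
    intro v₁ h0 hr n x hadj
    cases n with
    | zero =>
      have hx : x ∈ H.neighborSet v₀ := by rw [← hwk0 v₁]; exact hadj
      rw [(hAB v₀ hv₀).2] at hx
      simp only [Set.mem_insert_iff, Set.mem_singleton_iff] at hx
      rcases hx with h | h
      · exact Or.inl ⟨1, (hwk1 _).trans h.symm⟩
      · exact Or.inr ⟨1, (hwk1 _).trans h.symm⟩
    | succ n =>
      have hx : x ∈ H.neighborSet (wk v₁ (n + 1)) := hadj
      rw [hwnbr v₁ h0 n] at hx
      simp only [Set.mem_insert_iff, Set.mem_singleton_iff] at hx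
      rcases hx with h | h
      · exact hr ⟨n, h.symm⟩
      · exact hr ⟨n + 2, h.symm⟩
  have hclosed : ∀ u x : V, u ∈ Wset → H.Adj u x → x ∈ Wset := by
    rintro u x (⟨n, rfl⟩ | ⟨n, rfl⟩) hadj
    · exact hcl (A v₀) hA0 Set.subset_union_left n x hadj
    · exact hcl (B v₀) hB0 Set.subset_union_right n x hadj
  have hv₀W : v₀ ∈ Wset := Or.inl ⟨0, hwk0 _⟩
  have hreach : ∀ u : ↥H.verts, H.coe.Reachable ⟨v₀, hv₀⟩ u → (u : V) ∈ Wset := by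
    intro u hr
    obtain ⟨p⟩ := hr
    have hgen : ∀ (x y : ↥H.verts) (_ : H.coe.Walk x y), (x : V) ∈ Wset → (y : V) ∈ Wset := by
      intro x y p
      induction p with
      | nil => exact id
      | @cons a b c h p ih =>
        intro hx
        exact ih (hclosed _ _ hx h)
    exact hgen _ _ p hv₀W
  have hcompW : ∀ l : List Bool, comp l = κ → (Sum.inl l : V) ∈ Wset := by
    intro l hl
    refine hreach ⟨Sum.inl l, hmem l⟩ ?_
    have h1 : H.coe.connectedComponentMk ⟨Sum.inl l, hmem l⟩ =
        H.coe.connectedComponentMk ⟨v₀, hv₀⟩ := by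
      have h2 : comp l = comp l₀ := hl.trans hl₀.2.symm
      exact h2
    exact (SimpleGraph.ConnectedComponent.exact h1).symm
  -- the finite blocking set of low hubs
  set F : Set V := {v : V | ∃ t' i', v = Sum.inr (t', i') ∧ t'.length < δ ∧
      i' < 2 ^ (t'.length + 2)} with hFdef
  have hFfin : F.Finite := by
    have hsub : F ⊆ (fun p : List Bool × ℕ => Sum.inr p) ''
        ({l : List Bool | l.length < δ} ×ˢ {i : ℕ | i < 2 ^ (δ + 2)}) := by
      rintro v ⟨t', i', rfl, h1, h2⟩
      exact ⟨(t', i'), ⟨h1, lt_of_lt_of_le h2 (Nat.pow_le_pow_right (by norm_num) (by omega))⟩, rfl⟩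
    exact ((((finite_length_lt δ)).prod (Set.finite_Iio _)).image _).subset hsub
  -- dichotomy for a walk: eventually avoids F, or has finite range
  have hdicho : ∀ v₁, H.Adj v₀ v₁ →
      (∃ N, ∀ n, N ≤ n → wk v₁ n ∉ F) ∨ (Set.range (wk v₁)).Finite := by
    intro v₁ h0
    by_cases hI : {n | wk v₁ n ∈ F}.Finite
    · left
      obtain ⟨N, hN⟩ := hI.bddAbove
      exact ⟨N + 1, fun n hn hmem2 => by have := hN hmem2; omega⟩
    · right
      have hIinf : {n | wk v₁ n ∈ F}.Infinite := hI
      -- a vertex of F visited infinitely often, with the same successor twice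
      have hex : ∃ f ∈ F, {n | wk v₁ n = f ∧ 1 ≤ n}.Infinite := by
        by_contra hcon
        push_neg at hcon
        have hfin3 : ∀ f ∈ F, {n | wk v₁ n = f ∧ 1 ≤ n}.Finite := by
          intro f hf
          have := hcon f hf
          exact this
        apply hI
        have hsub : {n | wk v₁ n ∈ F} ⊆
            insert 0 (⋃ f ∈ F, {n | wk v₁ n = f ∧ 1 ≤ n}) := by
          intro n hn
          cases n with
          | zero => exact Set.mem_insert _ _
          | succ n =>
            refine Set.mem_insert_of_mem _ ?_
            simp only [Set.mem_iUnion, exists_prop]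
            exact ⟨wk v₁ (n + 1), hn, rfl, by omega⟩
        exact ((hFfin.biUnion hfin3).insert 0).subset hsub
      obtain ⟨f, hfF, hfib⟩ := hex
      have hsucc : ∀ n, 1 ≤ n → wk v₁ n = f →
          (wk v₁ (n + 1) = A f ∨ wk v₁ (n + 1) = B f) := by
        intro n h1 hn
        obtain ⟨m, rfl⟩ : ∃ m, n = m + 1 := ⟨n - 1, by omega⟩
        have hr : wk v₁ (m + 2) = nxt (wk v₁ (m + 1)) (wk v₁ m) :=
          wkF_succ_succ nxt v₀ v₁ m
        rw [show m + 1 + 1 = m + 2 from rfl, hr, hnxt]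
        dsimp only
        rw [hn]
        split
        · exact Or.inr rfl
        · exact Or.inl rfl
      have hone : {n | (wk v₁ n = f ∧ 1 ≤ n) ∧ wk v₁ (n + 1) = A f}.Infinite ∨
          {n | (wk v₁ n = f ∧ 1 ≤ n) ∧ wk v₁ (n + 1) = B f}.Infinite := by
        by_contra hcon
        push_neg at hcon
        obtain ⟨hc1, hc2⟩ := hcon
        apply hfib
        have hsub : {n | wk v₁ n = f ∧ 1 ≤ n} ⊆
            {n | (wk v₁ n = f ∧ 1 ≤ n) ∧ wk v₁ (n + 1) = A f} ∪
            {n | (wk v₁ n = f ∧ 1 ≤ n) ∧ wk v₁ (n + 1) = B f} := by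
          intro n hn
          rcases hsucc n hn.2 hn.1 with h | h
          · exact Or.inl ⟨hn, h⟩
          · exact Or.inr ⟨hn, h⟩
        exact (hc1.union hc2).subset hsub
      have hkey : ∃ n m, n < m ∧ wk v₁ n = wk v₁ m ∧ wk v₁ (n + 1) = wk v₁ (m + 1) := by
        rcases hone with h | h <;>
        · obtain ⟨n, hn, m, hm, hnm⟩ := h.nontrivial
          rcases lt_or_gt_of_ne hnm with hlt | hgt
          · exact ⟨n, m, hlt, hn.1.1.trans hm.1.1.symm, hn.2.trans hm.2.symm⟩
          · exact ⟨m, n, hgt, hm.1.1.trans hn.1.1.symm, hm.2.trans hn.2.symm⟩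
      obtain ⟨n, m, hnm, he1, he2⟩ := hkey
      have hdet : ∀ k, wk v₁ (n + k) = wk v₁ (m + k) ∧
          wk v₁ (n + k + 1) = wk v₁ (m + k + 1) := by
        intro k
        induction k with
        | zero => exact ⟨he1, he2⟩
        | succ k ih =>
          refine ⟨by simpa [← Nat.add_assoc] using ih.2, ?_⟩
          have hrn : wk v₁ (n + k + 2) = nxt (wk v₁ (n + k + 1)) (wk v₁ (n + k)) :=
            wkF_succ_succ nxt v₀ v₁ (n + k)
          have hrm : wk v₁ (m + k + 2) = nxt (wk v₁ (m + k + 1)) (wk v₁ (m + k)) :=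
            wkF_succ_succ nxt v₀ v₁ (m + k)
          have hgoal : wk v₁ (n + k + 2) = wk v₁ (m + k + 2) := by
            rw [hrn, hrm, ih.1, ih.2]
          have harith1 : n + (k + 1) + 1 = n + k + 2 := by omega
          have harith2 : m + (k + 1) + 1 = m + k + 2 := by omega
          rw [harith1, harith2]
          exact hgoal
      have hrange : ∀ j, wk v₁ j ∈ wk v₁ '' (Set.Iio m) := by
        intro j
        induction j using Nat.strong_induction_on with
        | _ j ih =>
          by_cases hj : j < m
          · exact ⟨j, hj, rfl⟩
          · have hjm : j = m + (j - m) := by omega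
            have hdj := (hdet (j - m)).1
            have hlt : n + (j - m) < j := by omega
            have hj2 : wk v₁ j = wk v₁ (n + (j - m)) := by
              conv_lhs => rw [hjm]
              exact hdj.symm
            rw [hj2]
            exact ih _ hlt
      have hsub2 : Set.range (wk v₁) ⊆ wk v₁ '' (Set.Iio m) := by
        rintro x ⟨j, rfl⟩
        exact hrange j
      exact ((Set.finite_Iio m).image _).subset hsub2
  -- choose for each of the three subtrees one of the two walks meeting it infinitely
  set Mv : List Bool → Set V := fun t => Sum.inl '' {l | t <+: l ∧ comp l = κ} with hMvdef
  have hMvinf : ∀ t, {l | t <+: l ∧ comp l = κ}.Infinite → (Mv t).Infinite := by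
    intro t ht
    exact (Set.infinite_image_iff Sum.inl_injective.injOn).mpr ht
  have hMvW : ∀ t, Mv t ⊆ Wset := by
    rintro t v ⟨l, hl, rfl⟩
    exact hcompW l hl.2
  have hsel : ∀ t : List Bool, {l | t <+: l ∧ comp l = κ}.Infinite →
      ∃ v₁, (v₁ = A v₀ ∨ v₁ = B v₀) ∧ (Mv t ∩ Set.range (wk v₁)).Infinite := by
    intro t hM
    by_contra hcon
    push_neg at hcon
    have h1 := hcon (A v₀) (Or.inl rfl)
    have h2 := hcon (B v₀) (Or.inr rfl)
    apply hMvinf t hM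
    have hsub : Mv t ⊆ (Mv t ∩ Set.range (wk (A v₀))) ∪ (Mv t ∩ Set.range (wk (B v₀))) := by
      intro v hv
      rcases hMvW t hv with h | h
      · exact Or.inl ⟨hv, h⟩
      · exact Or.inr ⟨hv, h⟩
    exact (h1.union h2).subset hsub
  obtain ⟨u₁, hu₁or, hu₁⟩ := hsel _ hM₁
  obtain ⟨u₂, hu₂or, hu₂⟩ := hsel _ hM₂
  obtain ⟨u₃, hu₃or, hu₃⟩ := hsel _ hM₃
  have hlen1 : (List.ofFn f₁).length = δ := List.length_ofFn
  have hlen2 : (List.ofFn f₂).length = δ := List.length_ofFn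
  have hlen3 : (List.ofFn f₃).length = δ := List.length_ofFn
  have hpair : ∃ (ta tb : List Bool) (v₁ : V), ta ≠ tb ∧ ta.length = δ ∧ tb.length = δ ∧
      H.Adj v₀ v₁ ∧ (Mv ta ∩ Set.range (wk v₁)).Infinite ∧
      (Mv tb ∩ Set.range (wk v₁)).Infinite := by
    rcases hu₁or with h1 | h1 <;> rcases hu₂or with h2 | h2 <;> rcases hu₃or with h3 | h3
    · exact ⟨_, _, A v₀, ht12, hlen1, hlen2, hA0, h1 ▸ hu₁, h2 ▸ hu₂⟩
    · exact ⟨_, _, A v₀, ht12, hlen1, hlen2, hA0, h1 ▸ hu₁, h2 ▸ hu₂⟩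
    · exact ⟨_, _, A v₀, ht13, hlen1, hlen3, hA0, h1 ▸ hu₁, h3 ▸ hu₃⟩
    · exact ⟨_, _, B v₀, ht23, hlen2, hlen3, hB0, h2 ▸ hu₂, h3 ▸ hu₃⟩
    · exact ⟨_, _, A v₀, ht23, hlen2, hlen3, hA0, h2 ▸ hu₂, h3 ▸ hu₃⟩
    · exact ⟨_, _, B v₀, ht13, hlen1, hlen3, hB0, h1 ▸ hu₁, h3 ▸ hu₃⟩
    · exact ⟨_, _, B v₀, ht12, hlen1, hlen2, hB0, h1 ▸ hu₁, h2 ▸ hu₂⟩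
    · exact ⟨_, _, B v₀, ht12, hlen1, hlen2, hB0, h1 ▸ hu₁, h2 ▸ hu₂⟩
  obtain ⟨ta, tb, v₁, htab, hta, htb, h0, hia, hib⟩ := hpair
  rcases hdicho v₁ h0 with ⟨N, hN⟩ | hfin2
  swap
  · exact hia (hfin2.subset Set.inter_subset_right)
  have hidx : ∀ tc : List Bool, (Mv tc ∩ Set.range (wk v₁)).Infinite →
      ∀ N', ∃ n, N' ≤ n ∧ wk v₁ n ∈ Mv tc := by
    intro tc hinf2 N'
    by_contra hcon
    push_neg at hcon
    have hsub : Mv tc ∩ Set.range (wk v₁) ⊆ wk v₁ '' (Set.Iio N') := by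
      rintro v ⟨hvM, j, rfl⟩
      rcases lt_or_ge j N' with hj | hj
      · exact ⟨j, hj, rfl⟩
      · exact absurd hvM (hcon j hj)
    exact hinf2 (((Set.finite_Iio N').image _).subset hsub)
  obtain ⟨n₁, hn₁N, hn₁M⟩ := hidx ta hia N
  have hreg : ∀ k, n₁ ≤ k → ((∃ l, wk v₁ k = Sum.inl l ∧ ta <+: l) ∨
      (∃ t'' i, wk v₁ k = Sum.inr (t'', i) ∧ ta <+: t'')) := by
    intro k hk
    induction k, hk using Nat.le_induction with
    | base =>
      obtain ⟨l, hl, heq⟩ := hn₁M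
      exact Or.inl ⟨l, heq.symm, hl.1⟩
    | succ k hk ih =>
      have hadjk : G.Adj (wk v₁ k) (wk v₁ (k + 1)) := (hwadj v₁ h0 k).adj_sub
      have hnF : wk v₁ (k + 1) ∉ F := hN (k + 1) (by omega)
      rcases ih with ⟨l, hlk, hpre⟩ | ⟨t'', i, hk2, hpre⟩
      · rw [hlk] at hadjk
        rcases hadjk with ⟨s, t', i', hh1, hh2, hh3, hh4⟩ | ⟨s, t', i', hh1, hh2, hh3, hh4⟩
        · obtain rfl : l = s := Sum.inl.inj hh1
          right
          refine ⟨t', i', hh2, ?_⟩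
          rcases List.prefix_or_prefix_of_prefix hpre hh3 with hcase | hcase
          · exact hcase
          · by_cases hlen : t'.length < δ
            · exact absurd ⟨t', i', hh2, hlen, hh4⟩ hnF
            · have h5 : t'.length ≤ ta.length := hcase.length_le
              rw [hta] at h5
              have h7 : t' = ta := hcase.eq_of_length (by rw [hta]; omega)
              rw [h7]
        · exact absurd hh2 (by simp)
      · rw [hk2] at hadjk
        rcases hadjk with ⟨s, t', i', hh1, hh2, hh3, hh4⟩ | ⟨s, t', i', hh1, hh2, hh3, hh4⟩
        · exact absurd hh1 (by simp)
        · left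
          have h8 : t'' = t' := congrArg Prod.fst (Sum.inr.inj hh2)
          refine ⟨s, hh1, hpre.trans ?_⟩
          rw [h8]
          exact hh3
  obtain ⟨n₂, hn₂N, hn₂M⟩ := hidx tb hib n₁
  obtain ⟨l, hl, heq⟩ := hn₂M
  rcases hreg n₂ hn₂N with ⟨l', he, hal⟩ | ⟨t'', i, he, -⟩
  · have hll : l' = l := by
      rw [he] at heq
      exact (Sum.inl.inj heq).symm
    have hbl : tb <+: l := hl.1
    have hal2 : ta <+: l := hll ▸ hal
    rcases List.prefix_or_prefix_of_prefix hal2 hbl with h | h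
    · exact htab (h.eq_of_length (hta.trans htb.symm))
    · exact htab ((h.eq_of_length (htb.trans hta.symm)).symm)
  · rw [he] at heq
    exact absurd heq (by simp)

end DHPx


theorem stmt3 : ∃ (V : Type) (G : SimpleGraph V) (S R : Set V),
    Countable V ∧ Infinite V ∧ BipartiteWith G S R ∧ DHP G S ∧
    (∀ v ∈ S, (G.neighborSet v).Finite) ∧
    ∀ H : G.Subgraph, S ⊆ H.verts → (∀ v ∈ H.verts, DegEq2 H v) →
      Infinite H.coe.ConnectedComponent :=
  ⟨DHPx.V, DHPx.G, DHPx.S, DHPx.R, inferInstance, inferInstance, DHPx.bip, DHPx.dhp,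
    DHPx.locfin, fun H hS hdeg => DHPx.main H hS hdeg⟩
end

section
/- Let G(A,B) be a bipartite graph satisfying the double Hall property with both sides A and B infinite, where every vertex of A has only finitely many neighbors. Suppose that for each vertex v ∈ B either the neighborhood N(v) is finite or N(v) = A \ F_v for some finite set F_v ⊆ A. Then the set B' = {v ∈ B : N(v) = A \ F_v for some finite F_v ⊆ A} is infinite. -/
lemma mk_eq_ncard_aux {α : Type*} {s : Set α} (hs : s.Finite) :
    Cardinal.mk s = s.ncard := by
  haveI := hs.fintype
  rw [Cardinal.mk_fintype, Set.ncard_eq_toFinset_card', Set.toFinset_card]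

theorem stmt6 {V : Type*} (G : SimpleGraph V) (A B : Set V)
    (hbip : BipartiteWith G A B) (hdhp : DHP G A)
    (hA : A.Infinite) (hB : B.Infinite)
    (hlf : ∀ v ∈ A, (G.neighborSet v).Finite)
    (hdeg : ∀ v ∈ B, (G.neighborSet v).Finite ∨
      ∃ F : Set V, F ⊆ A ∧ F.Finite ∧ G.neighborSet v = A \ F) :
    {v ∈ B | ∃ F : Set V, F ⊆ A ∧ F.Finite ∧ G.neighborSet v = A \ F}.Infinite := by
  set B' := {v ∈ B | ∃ F : Set V, F ⊆ A ∧ F.Finite ∧ G.neighborSet v = A \ F} with hB'def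
  by_contra hfin
  rw [Set.not_infinite] at hfin
  -- any vertex adjacent to a vertex of A lies in B
  have hadjB : ∀ {v x : V}, x ∈ A → G.Adj v x → v ∈ B := by
    intro v x hxA hadj
    rcases hbip.2.2 hadj with ⟨hv, hx⟩ | ⟨hv, hx⟩
    · exact absurd hx (Set.disjoint_left.mp hbip.2.1 hxA)
    · exact hv
  -- vertices of B not in B' have finite neighborhood
  have hfinN : ∀ {v : V}, v ∈ B → v ∉ B' → (G.neighborSet v).Finite := by
    intro v hvB hvB'
    rcases hdeg v hvB with h | h
    · exact h
    · exact absurd ⟨hvB, h⟩ hvB'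
  -- key construction: arbitrarily large finite sets X ⊆ A with N2 G X ⊆ B'
  have key : ∀ m : ℕ, ∃ X : Set V, X ⊆ A ∧ X.Finite ∧ X.ncard = m ∧ N2 G X ⊆ B' := by
    intro m
    induction m with
    | zero =>
        refine ⟨∅, by simp, Set.finite_empty, by simp, ?_⟩
        rintro v ⟨x, hx, _⟩
        exact absurd hx (Set.notMem_empty x)
    | succ n ih =>
        obtain ⟨X, hXA, hXf, hXc, hXN⟩ := ih
        set T : Set V :=
          X ∪ ⋃ x ∈ X, ⋃ v ∈ G.neighborSet x \ B', G.neighborSet v with hTdef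
        have hTf : T.Finite := by
          refine hXf.union (hXf.biUnion fun x hx => ?_)
          refine Set.Finite.biUnion ((hlf x (hXA hx)).diff) fun v hv => ?_
          have hvB : v ∈ B := hadjB (hXA hx) (hv.1.symm)
          exact hfinN hvB hv.2
        obtain ⟨a, haA, haT⟩ := (hA.diff hTf).nonempty
        have haX : a ∉ X := fun h => haT (Or.inl h)
        refine ⟨insert a X, Set.insert_subset haA hXA, hXf.insert a,
          by rw [Set.ncard_insert_of_notMem haX hXf, hXc], ?_⟩
        rintro v ⟨x, hx, y, hy, hxy, hvx, hvy⟩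
        -- helper: if one of the two neighbors is a and the other is in X, derive v ∈ B'
        have main : ∀ {y : V}, y ∈ X → G.Adj v a → G.Adj v y → v ∈ B' := by
          intro y hyX hva hvy
          by_contra hvB'
          have hvB : v ∈ B := hadjB (hXA hyX) hvy
          have : a ∈ T := by
            refine Or.inr ?_
            refine Set.mem_biUnion hyX ?_
            exact Set.mem_biUnion (⟨hvy.symm, hvB'⟩ : v ∈ G.neighborSet y \ B') hva
          exact haT this
        rcases Set.mem_insert_iff.mp hx with rfl | hxX
        · rcases Set.mem_insert_iff.mp hy with rfl | hyX
          · exact absurd rfl hxy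
          · exact main hyX hvx hvy
        · rcases Set.mem_insert_iff.mp hy with rfl | hyX
          · exact main hxX hvy hvx
          · exact hXN ⟨x, hxX, y, hyX, hxy, hvx, hvy⟩
  obtain ⟨X, hXA, hXf, hXc, hXN⟩ := key (B'.ncard + 2)
  have hmkX : Cardinal.mk X = (B'.ncard + 2 : ℕ) := by rw [mk_eq_ncard_aux hXf, hXc]
  have h2 : 2 ≤ Cardinal.mk X := by
    rw [hmkX]
    exact_mod_cast Nat.le_add_left 2 B'.ncard
  have hle : Cardinal.mk X ≤ Cardinal.mk B' :=
    (hdhp.2 X hXA h2).trans (Cardinal.mk_le_mk_of_subset hXN)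
  rw [hmkX, mk_eq_ncard_aux hfin] at hle
  have : B'.ncard + 2 ≤ B'.ncard := by exact_mod_cast hle
  omega
end

section
/- Suppose that every bipartite graph G(A,B) satisfying the double Hall property with both sides A and B infinite, in which every vertex of A has only finitely many neighbors and for each v ∈ B either N(v) is finite or N(v) = A \ F_v for some finite F_v ⊆ A, admits a family of pairwise vertex-disjoint double rays whose union contains every vertex of A. Then every finite bipartite graph M(X,Y) satisfying the double Hall property contains a path covering all vertices of X. -/
namespace Stmt10Aux

open Sum Set

variable {W : Type} (M : SimpleGraph W) (X : Set W)

/-- The big vertex type: countably many copies of `W` plus connector vertices. -/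
abbrev BigV (W : Type) : Type := (W × ℕ) ⊕ ℕ

/-- adjacency for the big graph -/
def bigAdj : BigV W → BigV W → Prop
  | .inl p, .inl q => p.2 = q.2 ∧ M.Adj p.1 q.1
  | .inl p, .inr j => p.1 ∈ X ∧ j ≤ p.2 + 2
  | .inr j, .inl p => p.1 ∈ X ∧ j ≤ p.2 + 2
  | .inr _, .inr _ => False

def bigG : SimpleGraph (BigV W) where
  Adj := bigAdj M X
  symm := by
    constructor
    rintro (⟨w, i⟩ | j) (⟨w', i'⟩ | j') h
    · exact ⟨h.1.symm, h.2.symm⟩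
    · exact h
    · exact h
    · exact h
  loopless := by
    constructor
    rintro (⟨w, i⟩ | j) h
    · exact M.loopless.irrefl w h.2
    · exact h

@[simp] lemma bigG_adj_inl_inl {w w' : W} {i i' : ℕ} :
    (bigG M X).Adj (inl (w, i)) (inl (w', i')) ↔ i = i' ∧ M.Adj w w' := Iff.rfl

@[simp] lemma bigG_adj_inl_inr {w : W} {i j : ℕ} :
    (bigG M X).Adj (inl (w, i)) (inr j) ↔ w ∈ X ∧ j ≤ i + 2 := Iff.rfl

@[simp] lemma bigG_adj_inr_inl {w : W} {i j : ℕ} :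
    (bigG M X).Adj (inr j) (inl (w, i)) ↔ w ∈ X ∧ j ≤ i + 2 := Iff.rfl

@[simp] lemma bigG_adj_inr_inr {j j' : ℕ} :
    ¬ (bigG M X).Adj (inr j) (inr j') := fun h => h

/-- The `A` side of the big graph. -/
def bigA : Set (BigV W) := {v | ∃ x ∈ X, ∃ i : ℕ, v = inl (x, i)}

/-- The `B` side of the big graph. -/
def bigB (Y : Set W) : Set (BigV W) :=
  {v | (∃ y ∈ Y, ∃ i : ℕ, v = inl (y, i)) ∨ ∃ j : ℕ, v = inr j}

/-- copy `i` of `W` inside the big graph -/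
def copySet (W : Type) (i : ℕ) : Set (BigV W) := {v | ∃ w : W, v = inl (w, i)}

lemma copySet_finite [Finite W] (i : ℕ) : (copySet W i).Finite := by
  have : copySet W i ⊆ (fun w : W => (inl (w, i) : BigV W)) '' Set.univ := by
    rintro v ⟨w, rfl⟩; exact ⟨w, trivial, rfl⟩
  exact Set.Finite.subset (Set.Finite.image _ Set.finite_univ) this



section Props

variable {W : Type} {M : SimpleGraph W} {X Y : Set W}

lemma big_bipartite (hbip : BipartiteWith M X Y) :
    BipartiteWith (bigG M X) (bigA X) (bigB Y) := by
  obtain ⟨hall, hdisj, hadj⟩ := hbip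
  refine ⟨?_, ?_, ?_⟩
  · rintro (⟨w, i⟩ | j)
    · rcases hall w with hw | hw
      · exact Or.inl ⟨w, hw, i, rfl⟩
      · exact Or.inr (Or.inl ⟨w, hw, i, rfl⟩)
    · exact Or.inr (Or.inr ⟨j, rfl⟩)
  · rw [Set.disjoint_left]
    rintro v ⟨x, hx, i, rfl⟩ (⟨y, hy, i', heq⟩ | ⟨j, heq⟩)
    · obtain ⟨rfl, rfl⟩ : x = y ∧ i = i' := by
        simpa [Prod.ext_iff] using heq
      exact hdisj.le_bot ⟨hx, hy⟩
    · simp at heq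
  · rintro (⟨w, i⟩ | j) (⟨w', i'⟩ | j') h
    · rcases hadj h.2 with ⟨hw, hw'⟩ | ⟨hw, hw'⟩
      · exact Or.inl ⟨⟨w, hw, i, rfl⟩, Or.inl ⟨w', hw', i', rfl⟩⟩
      · exact Or.inr ⟨Or.inl ⟨w, hw, i, rfl⟩, ⟨w', hw', i', rfl⟩⟩
    · exact Or.inl ⟨⟨w, h.1, i, rfl⟩, Or.inr ⟨j', rfl⟩⟩
    · exact Or.inr ⟨Or.inr ⟨j, rfl⟩, ⟨w', h.1, i', rfl⟩⟩
    · exact absurd h (bigG_adj_inr_inr M X)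

lemma bigA_infinite (hx0 : X.Nonempty) : (bigA (W := W) X).Infinite := by
  obtain ⟨x0, hx0⟩ := hx0
  exact Set.infinite_of_injective_forall_mem
    (f := fun i : ℕ => (inl (x0, i) : BigV W))
    (fun a b hab => by simpa [Prod.ext_iff] using hab)
    (fun i => ⟨x0, hx0, i, rfl⟩)

lemma bigB_infinite : (bigB (W := W) Y).Infinite :=
  Set.infinite_of_injective_forall_mem
    (f := fun j : ℕ => (inr j : BigV W))
    (fun a b hab => by simpa using hab)
    (fun j => Or.inr ⟨j, rfl⟩)

lemma bigA_locally_finite [Finite W] :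
    ∀ v ∈ bigA (W := W) X, ((bigG M X).neighborSet v).Finite := by
  rintro v ⟨x, hx, i, rfl⟩
  have hsub : (bigG M X).neighborSet (inl (x, i)) ⊆
      copySet W i ∪ (fun j : ℕ => (inr j : BigV W)) '' Set.Iic (i + 2) := by
    rintro (⟨w', i'⟩ | j) h
    · refine Or.inl ⟨w', ?_⟩
      have hi : i = i' := h.1
      rw [hi]
    · exact Or.inr ⟨j, h.2, rfl⟩
  exact Set.Finite.subset ((copySet_finite i).union
    (Set.Finite.image _ (Set.finite_Iic _))) hsub

lemma bigB_neighbors [Finite W] (hbip : BipartiteWith M X Y) :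
    ∀ v ∈ bigB (W := W) Y, (((bigG M X).neighborSet v).Finite ∨
      ∃ F : Set (BigV W), F ⊆ bigA X ∧ F.Finite ∧
        (bigG M X).neighborSet v = bigA X \ F) := by
  rintro v (⟨y, hy, i, rfl⟩ | ⟨j, rfl⟩)
  · left
    have hsub : (bigG M X).neighborSet (inl (y, i)) ⊆ copySet W i := by
      rintro (⟨w', i'⟩ | j) h
      · refine ⟨w', ?_⟩
        have hi : i = i' := h.1
        rw [hi]
      · have hyX : y ∈ X := h.1
        exact absurd hy (Set.disjoint_left.mp hbip.2.1 hyX)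
    exact Set.Finite.subset (copySet_finite i) hsub
  · right
    refine ⟨{v | ∃ x ∈ X, ∃ i : ℕ, v = inl (x, i) ∧ i + 2 < j}, ?_, ?_, ?_⟩
    · rintro v ⟨x, hx, i, rfl, _⟩; exact ⟨x, hx, i, rfl⟩
    · have hs : {v : BigV W | ∃ x ∈ X, ∃ i : ℕ, v = inl (x, i) ∧ i + 2 < j} ⊆
          (fun p : W × ℕ => (inl p : BigV W)) '' (Set.univ ×ˢ Set.Iio j) := by
        rintro v ⟨x, hx, i, rfl, hij⟩
        exact ⟨(x, i), ⟨trivial, show i < j by omega⟩, rfl⟩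
      exact Set.Finite.subset (Set.Finite.image _
        (Set.finite_univ.prod (Set.finite_Iio _))) hs
    · ext v
      constructor
      · intro h
        rcases v with ⟨w, i⟩ | j'
        · have hadj : w ∈ X ∧ j ≤ i + 2 := h
          refine ⟨⟨w, hadj.1, i, rfl⟩, ?_⟩
          rintro ⟨x, hx, i', heq, hlt⟩
          obtain ⟨rfl, rfl⟩ : w = x ∧ i = i' := by simpa [Prod.ext_iff] using heq
          omega
        · exact h.elim
      · rintro ⟨⟨x, hx, i, rfl⟩, hnF⟩
        refine (bigG_adj_inr_inl M X).mpr ⟨hx, ?_⟩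
        by_contra hlt
        exact hnF ⟨x, hx, i, rfl, by omega⟩


end Props

section DHPsec

variable {W : Type} {M : SimpleGraph W} {X : Set W}

lemma mk_eq_toFinset_card {α : Type*} {s : Set α} (hs : s.Finite) :
    Cardinal.mk s = hs.toFinset.card := by
  conv_lhs => rw [← hs.coe_toFinset]
  exact Cardinal.mk_coe_finset

/-- index of a vertex -/
def idxv : BigV W → ℕ := Sum.elim Prod.snd (fun _ => 0)

/-- finset of N2-witnesses in a finite graph -/
noncomputable def n2fin (M : SimpleGraph W) [Finite W] (s : Finset W) : Finset W :=
  (Set.toFinite (N2 M (↑s : Set W))).toFinset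

lemma mem_n2fin [Finite W] {s : Finset W} {v : W} :
    v ∈ n2fin M s ↔ v ∈ N2 M (↑s : Set W) := Set.Finite.mem_toFinset _

lemma big_dhp [Finite W] (hdhp : DHP M X) : DHP (bigG M X) (bigA X) := by
  classical
  obtain ⟨x₁, x₂, hx12⟩ := Cardinal.two_le_iff.mp hdhp.1
  have hx0 : (x₁ : W) ∈ X := x₁.2
  constructor
  · rw [Cardinal.two_le_iff]
    refine ⟨⟨inl (x₁, 0), ⟨x₁, hx0, 0, rfl⟩⟩, ⟨inl (x₁, 1), ⟨x₁, hx0, 1, rfl⟩⟩, ?_⟩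
    intro h
    have := congrArg Subtype.val h
    simp at this
  intro Z hZA hZ2
  by_cases hZf : Z.Finite
  swap
  · -- infinite case
    have hZinf : Z.Infinite := hZf
    have hcount : ∀ j : ℕ, (inr j : BigV W) ∈ N2 (bigG M X) Z := by
      intro j
      have hfin : ((fun p : W × ℕ => (inl p : BigV W)) '' (Set.univ ×ˢ Set.Iio j)).Finite :=
        Set.Finite.image _ (Set.finite_univ.prod (Set.finite_Iio _))
      have hdiff : (Z \ ((fun p : W × ℕ => (inl p : BigV W)) '' (Set.univ ×ˢ Set.Iio j))).Infinite :=
        hZinf.diff hfin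
      obtain ⟨z₁, hz₁⟩ := hdiff.nonempty
      obtain ⟨z₂, hz₂⟩ := (hdiff.diff (Set.finite_singleton z₁)).nonempty
      have hz₂' := hz₂.1
      have hne : z₂ ≠ z₁ := by
        intro h; exact hz₂.2 (by simp [h])
      have hadj : ∀ z, z ∈ Z \ ((fun p : W × ℕ => (inl p : BigV W)) ''
          (Set.univ ×ˢ Set.Iio j)) → (bigG M X).Adj (inr j) z := by
        rintro z ⟨hzZ, hzim⟩
        obtain ⟨x, hx, i, rfl⟩ := hZA hzZ
        refine (bigG_adj_inr_inl M X).mpr ⟨hx, ?_⟩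
        by_contra hle
        exact hzim ⟨(x, i), ⟨trivial, show i < j by omega⟩, rfl⟩
      exact ⟨z₁, hz₁.1, z₂, hz₂'.1, hne.symm, hadj z₁ hz₁, hadj z₂ hz₂'⟩
    have h1 : Cardinal.mk Z ≤ Cardinal.aleph0 := Cardinal.mk_le_aleph0
    have h2 : Cardinal.aleph0 ≤ Cardinal.mk (N2 (bigG M X) Z) := by
      have hinj : Function.Injective (fun j : ℕ => (⟨inr j, hcount j⟩ :
          N2 (bigG M X) Z)) := by
        intro a b hab
        simpa [Subtype.ext_iff] using hab
      simpa using Cardinal.mk_le_of_injective hinj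
    exact h1.trans h2
  · -- finite case
    obtain ⟨z₁, z₂, hz12⟩ := Cardinal.two_le_iff.mp hZ2
    obtain ⟨xz, hxz, iz, hz1eq⟩ := hZA z₁.2
    set Zf := hZf.toFinset with hZfdef
    have hZfmem : ∀ z, z ∈ Zf ↔ z ∈ Z := by intro z; simp [hZfdef]
    -- component map
    set compv : BigV W → W := Sum.elim Prod.fst (fun _ => xz) with hcompv
    have hzdecomp : ∀ z ∈ Zf, ∃ x, x ∈ X ∧ z = inl (x, idxv z) := by
      intro z hz
      obtain ⟨x, hx, i, rfl⟩ := hZA ((hZfmem z).mp hz)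
      exact ⟨x, hx, rfl⟩
    set I : Finset ℕ := Zf.image idxv with hI
    have hZfne : Zf.Nonempty := ⟨z₁, (hZfmem _).mpr z₁.2⟩
    have hIne : I.Nonempty := hZfne.image _
    set maxI := I.max' hIne with hmaxI
    set fib : ℕ → Finset (BigV W) := fun i => Zf.filter (fun z => idxv z = i) with hfib
    set m : ℕ → ℕ := fun i => (fib i).card with hm
    have hsum : Zf.card = ∑ i ∈ I, m i :=
      Finset.card_eq_sum_card_fiberwise (fun z hz => Finset.mem_image_of_mem _ hz)
    have hfibne : ∀ i ∈ I, 1 ≤ m i := by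
      intro i hi
      obtain ⟨z, hz, rfl⟩ := Finset.mem_image.mp hi
      have : z ∈ fib (idxv z) := Finset.mem_filter.mpr ⟨hz, rfl⟩
      exact Finset.card_pos.mpr ⟨z, this⟩
    -- per-copy projections
    set Zi : ℕ → Finset W := fun i => (fib i).image compv with hZi
    have hfibdec : ∀ i, ∀ z ∈ fib i, z = inl (compv z, i) ∧ compv z ∈ X := by
      intro i z hz
      have hz' := Finset.mem_filter.mp hz
      obtain ⟨x, hx, heq⟩ := hzdecomp z hz'.1
      rw [hz'.2] at heq
      subst heq
      exact ⟨rfl, hx⟩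
    have hZicard : ∀ i, (Zi i).card = m i := by
      intro i
      apply Finset.card_image_of_injOn
      intro z hz z' hz' heq
      rw [(hfibdec i z hz).1, (hfibdec i z' hz').1, heq]
    have hZiX : ∀ i, ↑(Zi i) ⊆ X := by
      intro i x hx
      obtain ⟨z, hz, rfl⟩ := Finset.mem_image.mp hx
      exact (hfibdec i z hz).2
    have hZiZ : ∀ i, ∀ x ∈ Zi i, (inl (x, i) : BigV W) ∈ Z := by
      intro i x hx
      obtain ⟨z, hz, rfl⟩ := Finset.mem_image.mp hx
      have := (hfibdec i z hz).1
      rw [← this]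
      exact (hZfmem z).mp (Finset.mem_filter.mp hz).1
    -- witnesses from M
    have hN2icard : ∀ i ∈ I, m i - 1 ≤ (n2fin M (Zi i)).card := by
      intro i _
      by_cases h2 : 2 ≤ m i
      · have hcard : Cardinal.mk ↑(↑(Zi i) : Set W) = (m i : Cardinal) := by
          rw [mk_eq_toFinset_card (Zi i).finite_toSet, Finset.finite_toSet_toFinset, hZicard]
        have hle := hdhp.2 ↑(Zi i) (hZiX i) (by rw [hcard]; exact_mod_cast h2)
        rw [hcard, mk_eq_toFinset_card (Set.toFinite (N2 M ↑(Zi i)))] at hle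
        have hle' : m i ≤ (n2fin M (Zi i)).card := by exact_mod_cast hle
        omega
      · omega
    -- the witness set
    set Wit : Finset (BigV W) :=
      (I.biUnion (fun i => (n2fin M (Zi i)).image (fun v => (inl (v, i) : BigV W)))) ∪
      (({inr 0, inr 1} : Finset (BigV W)) ∪
        (I.erase maxI).image (fun i => (inr (i + 2) : BigV W))) with hWit
    have hWitsub : ↑Wit ⊆ N2 (bigG M X) Z := by
      intro v hv
      rw [Finset.coe_union, Set.mem_union] at hv
      rcases hv with hv | hv
      · -- copy witnesses
        rw [Finset.coe_biUnion, Set.mem_iUnion] at hv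
        obtain ⟨i, hv⟩ := hv
        rw [Set.mem_iUnion] at hv
        obtain ⟨hi, hv⟩ := hv
        rw [Finset.coe_image, Set.mem_image] at hv
        obtain ⟨w, hw, rfl⟩ := hv
        rw [Finset.mem_coe, mem_n2fin] at hw
        obtain ⟨x, hx, y, hy, hxy, hax, hay⟩ := hw
        exact ⟨inl (x, i), hZiZ i x hx, inl (y, i), hZiZ i y hy,
          by simpa [Prod.ext_iff] using hxy,
          (bigG_adj_inl_inl M X).mpr ⟨rfl, hax⟩,
          (bigG_adj_inl_inl M X).mpr ⟨rfl, hay⟩⟩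
      · rw [Finset.coe_union, Set.mem_union] at hv
        have hz1A := hZA z₁.2
        have hz2A := hZA z₂.2
        obtain ⟨a₁, ha₁, i₁, he₁⟩ := hz1A
        obtain ⟨a₂, ha₂, i₂, he₂⟩ := hz2A
        have hzne : (z₁ : BigV W) ≠ (z₂ : BigV W) := fun h => hz12 (Subtype.ext h)
        rcases hv with hv | hv
        · -- inr 0, inr 1
          have hadj : ∀ j ≤ 1, ∀ z : BigV W, z ∈ Z → (bigG M X).Adj (inr j) z := by
            intro j hj z hz
            obtain ⟨a, ha, i, rfl⟩ := hZA hz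
            exact (bigG_adj_inr_inl M X).mpr ⟨ha, by omega⟩
          simp only [Finset.coe_insert, Set.mem_insert_iff, Finset.coe_singleton,
            Set.mem_singleton_iff] at hv
          rcases hv with rfl | rfl
          · exact ⟨z₁, z₁.2, z₂, z₂.2, hzne, hadj 0 (by omega) _ z₁.2, hadj 0 (by omega) _ z₂.2⟩
          · exact ⟨z₁, z₁.2, z₂, z₂.2, hzne, hadj 1 (by omega) _ z₁.2, hadj 1 (by omega) _ z₂.2⟩
        · -- inr (i+2) for i < maxI
          rw [Finset.coe_image, Set.mem_image] at hv
          obtain ⟨i, hi, rfl⟩ := hv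
          have hiI : i ∈ I := Finset.mem_of_mem_erase hi
          have hilt : i < maxI :=
            lt_of_le_of_ne (Finset.le_max' I i hiI) (Finset.ne_of_mem_erase hi)
          obtain ⟨zi, hzi⟩ := Finset.card_pos.mp (hfibne i hiI)
          have hmaxII : maxI ∈ I := Finset.max'_mem I hIne
          obtain ⟨zm, hzm⟩ := Finset.card_pos.mp (hfibne maxI hmaxII)
          have hzidec := hfibdec i zi hzi
          have hzmdec := hfibdec maxI zm hzm
          have hne : zi ≠ zm := by
            intro h
            have h1 := (Finset.mem_filter.mp hzi).2
            have h2 := (Finset.mem_filter.mp hzm).2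
            rw [h] at h1
            omega
          refine ⟨zi, (hZfmem zi).mp (Finset.mem_filter.mp hzi).1,
            zm, (hZfmem zm).mp (Finset.mem_filter.mp hzm).1, hne, ?_, ?_⟩
          · rw [hzidec.1]
            exact (bigG_adj_inr_inl M X).mpr ⟨hzidec.2, by omega⟩
          · rw [hzmdec.1]
            exact (bigG_adj_inr_inl M X).mpr ⟨hzmdec.2, by omega⟩
    -- cardinality of Wit
    have hcard : Zf.card + 1 ≤ Wit.card := by
      have hdisj1 : Disjoint
          (I.biUnion (fun i => (n2fin M (Zi i)).image (fun v => (inl (v, i) : BigV W))))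
          (({inr 0, inr 1} : Finset (BigV W)) ∪
            (I.erase maxI).image (fun i => (inr (i + 2) : BigV W))) := by
        rw [Finset.disjoint_left]
        intro v hv hv'
        rw [Finset.mem_biUnion] at hv
        obtain ⟨i, _, hv⟩ := hv
        obtain ⟨w, _, rfl⟩ := Finset.mem_image.mp hv
        rw [Finset.mem_union] at hv'
        rcases hv' with hv' | hv'
        · simp at hv'
        · obtain ⟨_, _, h⟩ := Finset.mem_image.mp hv'
          simp at h
      have hdisj2 : Disjoint ({inr 0, inr 1} : Finset (BigV W))
          ((I.erase maxI).image (fun i => (inr (i + 2) : BigV W))) := by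
        rw [Finset.disjoint_left]
        intro v hv hv'
        obtain ⟨i, _, rfl⟩ := Finset.mem_image.mp hv'
        simp only [Finset.mem_insert, Finset.mem_singleton] at hv
        rcases hv with h | h <;> · rw [Sum.inr.injEq] at h; omega
      have hbi : (I.biUnion (fun i => (n2fin M (Zi i)).image (fun v => (inl (v, i) : BigV W)))).card
          = ∑ i ∈ I, ((n2fin M (Zi i)).image (fun v => (inl (v, i) : BigV W))).card := by
        apply Finset.card_biUnion
        intro i hi j hj hij
        rw [Function.onFun, Finset.disjoint_left]
        intro v hv hv'
        obtain ⟨w, _, rfl⟩ := Finset.mem_image.mp hv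
        obtain ⟨w', _, h⟩ := Finset.mem_image.mp hv'
        rw [Sum.inl.injEq, Prod.ext_iff] at h
        exact hij h.2.symm
      have himcard : ∀ i, ((n2fin M (Zi i)).image (fun v => (inl (v, i) : BigV W))).card
          = (n2fin M (Zi i)).card := by
        intro i
        apply Finset.card_image_of_injective
        intro a b h
        simpa [Prod.ext_iff] using h
      have h01 : ({inr 0, inr 1} : Finset (BigV W)).card = 2 := by
        rw [Finset.card_insert_of_notMem (by simp), Finset.card_singleton]
      have herase : ((I.erase maxI).image (fun i => (inr (i + 2) : BigV W))).card
          = I.card - 1 := by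
        rw [Finset.card_image_of_injective _ (fun a b h => by simpa using h),
          Finset.card_erase_of_mem (Finset.max'_mem I hIne)]
      have hsum2 : ∑ i ∈ I, (m i - 1) + I.card = Zf.card := by
        rw [hsum]
        have hcong : ∑ i ∈ I, m i = ∑ i ∈ I, ((m i - 1) + 1) :=
          Finset.sum_congr rfl (fun i hi => (Nat.succ_pred_eq_of_pos (hfibne i hi)).symm)
        rw [hcong, Finset.sum_add_distrib, Finset.sum_const, smul_eq_mul, mul_one]
      have hIpos : 1 ≤ I.card := hIne.card_pos
      have hge : ∑ i ∈ I, (m i - 1) ≤ ∑ i ∈ I, (n2fin M (Zi i)).card :=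
        Finset.sum_le_sum hN2icard
      rw [hWit, Finset.card_union_of_disjoint hdisj1, Finset.card_union_of_disjoint hdisj2,
        hbi, h01, herase]
      simp only [himcard]
      omega
    -- conclude
    calc Cardinal.mk Z = (Zf.card : Cardinal) := mk_eq_toFinset_card hZf
      _ ≤ (Wit.card : Cardinal) := by exact_mod_cast Nat.le_of_succ_le hcard
      _ = Cardinal.mk ↑(↑Wit : Set (BigV W)) := Cardinal.mk_coe_finset.symm
      _ ≤ Cardinal.mk (N2 (bigG M X) Z) := Cardinal.mk_le_mk_of_subset hWitsub


end DHPsec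

section Walks

variable {W : Type} {M : SimpleGraph W}

lemma walk_of_chain (M : SimpleGraph W) :
    ∀ (L : ℕ) (w : ℕ → W), (∀ k, k < L → M.Adj (w k) (w (k + 1))) →
    (∀ k k', k ≤ L → k' ≤ L → w k = w k' → k = k') →
    ∃ p : M.Walk (w 0) (w L), p.IsPath ∧ ∀ v, v ∈ p.support ↔ ∃ k, k ≤ L ∧ w k = v := by
  intro L
  induction L with
  | zero =>
    intro w _ _
    refine ⟨SimpleGraph.Walk.nil, SimpleGraph.Walk.IsPath.nil, ?_⟩
    intro v
    simp only [SimpleGraph.Walk.support_nil, List.mem_singleton]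
    constructor
    · rintro rfl; exact ⟨0, le_rfl, rfl⟩
    · rintro ⟨k, hk, rfl⟩
      interval_cases k
      rfl
  | succ L ih =>
    intro w hadj hinjw
    obtain ⟨p, hp, hsupp⟩ := ih (fun k => w (k + 1))
      (fun k hk => hadj (k + 1) (by omega))
      (fun k k' hk hk' h => by
        have := hinjw (k + 1) (k' + 1) (by omega) (by omega) h
        omega)
    refine ⟨SimpleGraph.Walk.cons (hadj 0 (by omega)) p, ?_, ?_⟩
    · rw [SimpleGraph.Walk.cons_isPath_iff]
      refine ⟨hp, fun hmem => ?_⟩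
      obtain ⟨k, hk, hkeq⟩ := (hsupp _).mp hmem
      have := hinjw (k + 1) 0 (by omega) (by omega) hkeq
      omega
    · intro v
      rw [SimpleGraph.Walk.support_cons, List.mem_cons, hsupp v]
      constructor
      · rintro (rfl | ⟨k, hk, rfl⟩)
        · exact ⟨0, by omega, rfl⟩
        · exact ⟨k + 1, by omega, rfl⟩
      · rintro ⟨k, hk, rfl⟩
        cases k with
        | zero => exact Or.inl rfl
        | succ k => exact Or.inr ⟨k, by omega, rfl⟩

end Walks
end Stmt10Aux

open Stmt10Aux Sum in
theorem stmt10
    (hyp : ∀ (V : Type) (G : SimpleGraph V) (A B : Set V),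
      BipartiteWith G A B → DHP G A → A.Infinite → B.Infinite →
      (∀ v ∈ A, (G.neighborSet v).Finite) →
      (∀ v ∈ B, (G.neighborSet v).Finite ∨
        ∃ F : Set V, F ⊆ A ∧ F.Finite ∧ G.neighborSet v = A \ F) →
      ∃ (ι : Type) (f : ι → ℤ → V),
        (∀ i, Function.Injective (f i)) ∧
        (∀ i n, G.Adj (f i n) (f i (n + 1))) ∧
        (Pairwise fun i j => Disjoint (Set.range (f i)) (Set.range (f j))) ∧
        A ⊆ ⋃ i, Set.range (f i)) :
    ∀ (W : Type) (M : SimpleGraph W) (X Y : Set W), Finite W →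
      BipartiteWith M X Y → DHP M X →
      ∃ (u v : W) (p : M.Walk u v), p.IsPath ∧ ∀ x ∈ X, x ∈ p.support := by
  intro W M X Y hWfin hbip hdhp
  classical
  by_contra hno
  push_neg at hno
  obtain ⟨x₁, x₂, hx12⟩ := Cardinal.two_le_iff.mp hdhp.1
  have hx0 : (x₁ : W) ∈ X := x₁.2
  have hXne : X.Nonempty := ⟨x₁, hx0⟩
  obtain ⟨ι, f, hinj, hadj, hdisj, hcov⟩ := hyp (BigV W) (bigG M X) (bigA X) (bigB Y)
    (big_bipartite hbip) (big_dhp hdhp) (bigA_infinite hXne) bigB_infinite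
    bigA_locally_finite (bigB_neighbors hbip)
  -- maximal segments of rays inside a copy
  have hseg : ∀ (κ : ι) (n₀ : ℤ) (i : ℕ), f κ n₀ ∈ copySet W i →
      ∃ a b : ℤ, a < n₀ ∧ n₀ < b ∧ f κ a ∉ copySet W i ∧ f κ b ∉ copySet W i ∧
        (∀ m, a < m → m < b → f κ m ∈ copySet W i) ∧
        (∀ z, z < n₀ → f κ z ∉ copySet W i → z ≤ a) ∧
        (∀ z, n₀ < z → f κ z ∉ copySet W i → b ≤ z) := by
    intro κ n₀ i h₀
    have hbddL : ∃ z : ℤ, z < n₀ ∧ f κ z ∉ copySet W i := by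
      by_contra hc
      push_neg at hc
      have hinf : (copySet W i).Infinite := by
        refine Set.infinite_of_injective_forall_mem
          (f := fun t : ℕ => f κ (n₀ - 1 - t)) ?_ ?_
        · intro s t hst
          have := hinj κ hst
          omega
        · intro t
          exact hc _ (by omega)
      exact hinf (copySet_finite i)
    have hbddR : ∃ z : ℤ, n₀ < z ∧ f κ z ∉ copySet W i := by
      by_contra hc
      push_neg at hc
      have hinf : (copySet W i).Infinite := by
        refine Set.infinite_of_injective_forall_mem
          (f := fun t : ℕ => f κ (n₀ + 1 + t)) ?_ ?_
        · intro s t hst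
          have := hinj κ hst
          omega
        · intro t
          exact hc _ (by omega)
      exact hinf (copySet_finite i)
    obtain ⟨a, ha, hamax⟩ := Int.exists_greatest_of_bdd
      (P := fun z => z < n₀ ∧ f κ z ∉ copySet W i)
      ⟨n₀, fun z hz => le_of_lt hz.1⟩ hbddL
    obtain ⟨b, hb, hbmin⟩ := Int.exists_least_of_bdd
      (P := fun z => n₀ < z ∧ f κ z ∉ copySet W i)
      ⟨n₀, fun z hz => le_of_lt hz.1⟩ hbddR
    refine ⟨a, b, ha.1, hb.1, ha.2, hb.2, ?_, ?_, ?_⟩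
    · intro m hma hmb
      by_contra hnot
      rcases lt_trichotomy m n₀ with h | h | h
      · have := hamax m ⟨h, hnot⟩
        omega
      · subst h; exact hnot h₀
      · have := hbmin m ⟨h, hnot⟩
        omega
    · intro z hz hznot
      exact hamax z ⟨hz, hznot⟩
    · intro z hz hznot
      exact hbmin z ⟨hz, hznot⟩
  -- a segment covering all of `X` would give a path, contradiction
  have hwalk : ∀ (κ : ι) (i : ℕ) (a b : ℤ),
      (∀ m, a < m → m < b → f κ m ∈ copySet W i) →
      (∀ x ∈ X, ∃ m, a < m ∧ m < b ∧ f κ m = inl (x, i)) → False := by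
    intro κ i a b hin hcover
    have hba : a + 2 ≤ b := by
      obtain ⟨m, hm1, hm2, _⟩ := hcover x₁ hx0
      omega
    set w : ℕ → W := fun k => Sum.elim Prod.fst (fun _ => (x₁ : W)) (f κ (a + 1 + k)) with hw
    set L : ℕ := (b - a - 2).toNat with hLdef
    have hL : (L : ℤ) = b - a - 2 := Int.toNat_of_nonneg (by omega)
    have hfact : ∀ k : ℕ, k ≤ L → f κ (a + 1 + k) = inl (w k, i) := by
      intro k hk
      have hkz : (k : ℤ) ≤ b - a - 2 := by
        rw [← hL]; exact_mod_cast hk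
      obtain ⟨wv, heq⟩ := hin (a + 1 + k) (by omega) (by omega)
      have hwk : w k = wv := by rw [hw]; simp only [heq]; rfl
      rw [heq, hwk]
    have hadjk : ∀ k, k < L → M.Adj (w k) (w (k + 1)) := by
      intro k hk
      have h1 := hadj κ (a + 1 + k)
      rw [hfact k (by omega)] at h1
      have harith : a + 1 + (k : ℤ) + 1 = a + 1 + ((k + 1 : ℕ) : ℤ) := by push_cast; ring
      rw [harith, hfact (k + 1) (by omega)] at h1
      exact h1.2
    have hinjk : ∀ k k', k ≤ L → k' ≤ L → w k = w k' → k = k' := by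
      intro k k' hk hk' heq
      have h1 := hfact k hk
      have h2 := hfact k' hk'
      rw [heq] at h1
      have := hinj κ (h1.trans h2.symm)
      omega
    obtain ⟨p, hp, hsupp⟩ := walk_of_chain M L w hadjk hinjk
    obtain ⟨x, hx, hxnot⟩ := hno (w 0) (w L) p hp
    obtain ⟨m, hm1, hm2, hmeq⟩ := hcover x hx
    set k : ℕ := (m - (a + 1)).toNat with hkdef
    have hkz : (k : ℤ) = m - (a + 1) := Int.toNat_of_nonneg (by omega)
    have hkL : k ≤ L := by
      have : (k : ℤ) ≤ (L : ℤ) := by omega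
      exact_mod_cast this
    have hwkx : w k = x := by
      have h1 := hfact k hkL
      have h2 : a + 1 + (k : ℤ) = m := by omega
      rw [h2, hmeq] at h1
      have := Sum.inl.inj h1.symm
      exact (Prod.ext_iff.mp this).1
    exact hxnot ((hsupp x).mpr ⟨k, hkL, hwkx⟩)
  -- crossing edges
  set CE : ℕ → Set (ι × ℤ) := fun i =>
    {e | (f e.1 e.2 ∈ copySet W i ∧ f e.1 (e.2 + 1) ∉ copySet W i) ∨
      (f e.1 e.2 ∉ copySet W i ∧ f e.1 (e.2 + 1) ∈ copySet W i)} with hCE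
  have hcross1 : ∀ (i : ℕ) (κ : ι) (n : ℤ), f κ n ∈ copySet W i →
      f κ (n + 1) ∉ copySet W i → ∃ j, j ≤ i + 2 ∧ f κ (n + 1) = inr j := by
    intro i κ n h1 h2
    obtain ⟨wv, heq⟩ := h1
    have h3 := hadj κ n
    rw [heq] at h3
    rcases hval : f κ (n + 1) with p | j
    · rw [hval] at h3
      obtain ⟨w', i'⟩ := p
      have hi : i = i' := h3.1
      exact absurd ⟨w', by rw [hval, hi]⟩ h2
    · rw [hval] at h3
      exact ⟨j, h3.2, rfl⟩
  have hcross2 : ∀ (i : ℕ) (κ : ι) (n : ℤ), f κ n ∉ copySet W i →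
      f κ (n + 1) ∈ copySet W i → ∃ j, j ≤ i + 2 ∧ f κ n = inr j := by
    intro i κ n h1 h2
    obtain ⟨wv, heq⟩ := h2
    have h3 := hadj κ n
    rw [heq] at h3
    rcases hval : f κ n with p | j
    · rw [hval] at h3
      obtain ⟨w', i'⟩ := p
      have hi : i' = i := h3.1
      exact absurd ⟨w', by rw [hval, hi]⟩ h1
    · rw [hval] at h3
      exact ⟨j, h3.2, rfl⟩
  -- each copy has at least four crossing edges
  have hkey : ∀ i : ℕ, ∃ S : Set (ι × ℤ), S ⊆ CE i ∧ S.Finite ∧ S.ncard = 4 := by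
    intro i
    have hxiA : (inl ((x₁ : W), i) : BigV W) ∈ bigA X := ⟨x₁, hx0, i, rfl⟩
    obtain ⟨κ, n₀, hn₀⟩ : ∃ (κ : ι) (n₀ : ℤ), f κ n₀ = inl ((x₁ : W), i) := by
      have hmem := hcov hxiA
      rw [Set.mem_iUnion] at hmem
      obtain ⟨κ, hκ⟩ := hmem
      obtain ⟨n₀, h⟩ := hκ
      exact ⟨κ, n₀, h⟩
    have h₀ : f κ n₀ ∈ copySet W i := ⟨x₁, hn₀⟩
    obtain ⟨a, b, hha, hhb, hfa, hfb, hsegin, hamax, hbmin⟩ := hseg κ n₀ i h₀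
    have hnotall : ∃ x', x' ∈ X ∧ ∀ m, ¬(a < m ∧ m < b ∧ f κ m = inl (x', i)) := by
      by_contra hc
      push_neg at hc
      refine hwalk κ i a b hsegin ?_
      intro x hx
      exact hc x hx
    obtain ⟨x', hx', hx'nc⟩ := hnotall
    have hx'A : (inl (x', i) : BigV W) ∈ bigA X := ⟨x', hx', i, rfl⟩
    obtain ⟨κ', n', hn'⟩ : ∃ (κ' : ι) (n' : ℤ), f κ' n' = inl (x', i) := by
      have hmem := hcov hx'A
      rw [Set.mem_iUnion] at hmem
      obtain ⟨κ', hκ⟩ := hmem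
      obtain ⟨n', h⟩ := hκ
      exact ⟨κ', n', h⟩
    have h₀' : f κ' n' ∈ copySet W i := ⟨x', hn'⟩
    obtain ⟨a', b', hha', hhb', hfa', hfb', hsegin', hamax', hbmin'⟩ := hseg κ' n' i h₀'
    have he₁ : (κ, a) ∈ CE i :=
      Or.inr ⟨hfa, hsegin (a + 1) (by omega) (by omega)⟩
    have he₂ : (κ, b - 1) ∈ CE i :=
      Or.inl ⟨hsegin (b - 1) (by omega) (by omega),
        by rw [show b - 1 + 1 = b by ring]; exact hfb⟩
    have he₃ : (κ', a') ∈ CE i :=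
      Or.inr ⟨hfa', hsegin' (a' + 1) (by omega) (by omega)⟩
    have he₄ : (κ', b' - 1) ∈ CE i :=
      Or.inl ⟨hsegin' (b' - 1) (by omega) (by omega),
        by rw [show b' - 1 + 1 = b' by ring]; exact hfb'⟩
    have hd : ((κ, a) ≠ (κ, b - 1)) ∧ ((κ, a) ≠ (κ', a')) ∧ ((κ, a) ≠ (κ', b' - 1)) ∧
        ((κ, b - 1) ≠ (κ', a')) ∧ ((κ, b - 1) ≠ (κ', b' - 1)) ∧ ((κ', a') ≠ (κ', b' - 1)) := by
      by_cases hκκ : κ = κ'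
      · subst hκκ
        have hn'apos : ¬(a < n' ∧ n' < b) := fun hco => hx'nc n' ⟨hco.1, hco.2, hn'⟩
        have hn'nea : n' ≠ a := by
          intro h; rw [← h] at hfa; exact hfa ⟨x', hn'⟩
        have hn'neb : n' ≠ b := by
          intro h; rw [← h] at hfb; exact hfb ⟨x', hn'⟩
        rcases (by omega : n' < a ∨ b < n') with hlt | hgt
        · have hb'a : b' ≤ a := hbmin' a (by omega) hfa
          refine ⟨?_, ?_, ?_, ?_, ?_, ?_⟩ <;> (intro h; rw [Prod.mk.injEq] at h; omega)
        · have hba' : b ≤ a' := hamax' b (by omega) hfb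
          refine ⟨?_, ?_, ?_, ?_, ?_, ?_⟩ <;> (intro h; rw [Prod.mk.injEq] at h; omega)
      · exact ⟨by intro h; rw [Prod.mk.injEq] at h; omega,
          fun h => hκκ (congrArg Prod.fst h),
          fun h => hκκ (congrArg Prod.fst h),
          fun h => hκκ (congrArg Prod.fst h),
          fun h => hκκ (congrArg Prod.fst h),
          by intro h; rw [Prod.mk.injEq] at h; omega⟩
    obtain ⟨d1, d2, d3, d4, d5, d6⟩ := hd
    refine ⟨{(κ, a), (κ, b - 1), (κ', a'), (κ', b' - 1)}, ?_, Set.toFinite _, ?_⟩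
    · intro e he
      rcases he with rfl | rfl | rfl | rfl
      exacts [he₁, he₂, he₃, he₄]
    · have hnm1 : (κ, a) ∉ ({(κ, b - 1), (κ', a'), (κ', b' - 1)} : Set (ι × ℤ)) := by
        simp only [Set.mem_insert_iff, Set.mem_singleton_iff]
        push_neg
        exact ⟨d1, d2, d3⟩
      have hnm2 : (κ, b - 1) ∉ ({(κ', a'), (κ', b' - 1)} : Set (ι × ℤ)) := by
        simp only [Set.mem_insert_iff, Set.mem_singleton_iff]
        push_neg
        exact ⟨d4, d5⟩
      have hnm3 : (κ', a') ∉ ({(κ', b' - 1)} : Set (ι × ℤ)) := by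
        simp only [Set.mem_singleton_iff]
        exact d6
      rw [Set.ncard_insert_of_notMem hnm1, Set.ncard_insert_of_notMem hnm2,
        Set.ncard_insert_of_notMem hnm3, Set.ncard_singleton]
  -- now the counting argument
  obtain ⟨S₀, hS₀sub, hS₀fin, hS₀card⟩ := hkey 0
  obtain ⟨S₁, hS₁sub, hS₁fin, hS₁card⟩ := hkey 1
  obtain ⟨S₂, hS₂sub, hS₂fin, hS₂card⟩ := hkey 2
  have hinrnotcopy : ∀ (j : ℕ) (i'' : ℕ), (inr j : BigV W) ∉ copySet W i'' := by
    rintro j i'' ⟨w1, h⟩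
    simp at h
  have hCEdisj : ∀ i i' : ℕ, i ≠ i' → ∀ e, e ∈ CE i → e ∈ CE i' → False := by
    intro i i' hne e hei hei'
    have hcopydisj : ∀ v : BigV W, v ∈ copySet W i → v ∈ copySet W i' → False := by
      rintro v ⟨w1, rfl⟩ ⟨w2, h⟩
      rw [Sum.inl.injEq, Prod.mk.injEq] at h
      exact hne h.2
    rcases hei with ⟨h1, h2⟩ | ⟨h1, h2⟩ <;> rcases hei' with ⟨h1', h2'⟩ | ⟨h1', h2'⟩
    · exact hcopydisj _ h1 h1'
    · obtain ⟨j, _, hj⟩ := hcross1 i e.1 e.2 h1 h2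
      exact hinrnotcopy j i' (hj ▸ h2')
    · obtain ⟨j, _, hj⟩ := hcross1 i' e.1 e.2 h1' h2'
      exact hinrnotcopy j i (hj ▸ h2)
    · exact hcopydisj _ h2 h2'
  set Φ : ι × ℤ → BigV W × Bool := fun e =>
    if (f e.1 e.2).isRight then (f e.1 e.2, true) else (f e.1 (e.2 + 1), false) with hΦ
  have hranges : ∀ (κ κ' : ι) (n n' : ℤ), f κ n = f κ' n' → κ = κ' := by
    intro κ κ' n n' hv
    by_contra hne
    exact Set.disjoint_left.mp (hdisj hne) ⟨n, rfl⟩ (hv ▸ ⟨n', rfl⟩)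
  have hΦinj : Function.Injective Φ := by
    intro e e' heq
    simp only [hΦ] at heq
    by_cases h1 : (f e.1 e.2).isRight <;> by_cases h2 : (f e'.1 e'.2).isRight
    · rw [if_pos h1, if_pos h2] at heq
      have hv := (Prod.ext_iff.mp heq).1
      have hκ : e.1 = e'.1 := hranges _ _ _ _ hv
      rw [← hκ] at hv
      have hn : e.2 = e'.2 := hinj e.1 hv
      exact Prod.ext hκ hn
    · rw [if_pos h1, if_neg h2] at heq
      exact absurd (Prod.ext_iff.mp heq).2 (by simp)
    · rw [if_neg h1, if_pos h2] at heq
      exact absurd (Prod.ext_iff.mp heq).2 (by simp)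
    · rw [if_neg h1, if_neg h2] at heq
      have hv := (Prod.ext_iff.mp heq).1
      have hκ : e.1 = e'.1 := hranges _ _ _ _ hv
      rw [← hκ] at hv
      have hn : e.2 + 1 = e'.2 + 1 := hinj e.1 hv
      exact Prod.ext hκ (by omega)
  set T : Finset (BigV W × Bool) :=
    ((Finset.range 5).image (fun j => (inr j : BigV W))) ×ˢ
      (Finset.univ : Finset Bool) with hT
  have hmemT : ∀ (j : ℕ), j ≤ 4 → ∀ s : Bool, ((inr j : BigV W), s) ∈ T := by
    intro j hj s
    rw [hT, Finset.mem_product]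
    exact ⟨Finset.mem_image.mpr ⟨j, Finset.mem_range.mpr (by omega), rfl⟩, Finset.mem_univ _⟩
  have hΦT : ∀ i : ℕ, i ≤ 2 → ∀ e ∈ CE i, Φ e ∈ (↑T : Set (BigV W × Bool)) := by
    intro i hi e he
    rcases he with ⟨h1, h2⟩ | ⟨h1, h2⟩
    · obtain ⟨j, hj, hjeq⟩ := hcross1 i e.1 e.2 h1 h2
      obtain ⟨wv, hweq⟩ := h1
      have hright : ¬ (f e.1 e.2).isRight := by rw [hweq]; simp
      have hΦe : Φ e = (f e.1 (e.2 + 1), false) := by rw [hΦ]; simp only [if_neg hright]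
      rw [hΦe, hjeq]
      exact hmemT j (by omega) false
    · obtain ⟨j, hj, hjeq⟩ := hcross2 i e.1 e.2 h1 h2
      have hright : (f e.1 e.2).isRight := by rw [hjeq]; simp
      have hΦe : Φ e = (f e.1 e.2, true) := by rw [hΦ]; simp only [if_pos hright]
      rw [hΦe, hjeq]
      exact hmemT j (by omega) true
  have hd01 : Disjoint S₀ S₁ := Set.disjoint_left.mpr
    (fun he0 he1 => fun h => hCEdisj 0 1 (by omega) _ (hS₀sub he1) (hS₁sub h))
  have hd02 : Disjoint S₀ S₂ := Set.disjoint_left.mpr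
    (fun he0 he1 => fun h => hCEdisj 0 2 (by omega) _ (hS₀sub he1) (hS₂sub h))
  have hd12 : Disjoint S₁ S₂ := Set.disjoint_left.mpr
    (fun he0 he1 => fun h => hCEdisj 1 2 (by omega) _ (hS₁sub he1) (hS₂sub h))
  have h01card : (S₀ ∪ S₁).ncard = 8 := by
    rw [Set.ncard_union_eq hd01 hS₀fin hS₁fin, hS₀card, hS₁card]
  have hUcard : (S₀ ∪ S₁ ∪ S₂).ncard = 12 := by
    rw [Set.ncard_union_eq (Set.disjoint_union_left.mpr ⟨hd02, hd12⟩)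
      (hS₀fin.union hS₁fin) hS₂fin, h01card, hS₂card]
  have himage : Φ '' (S₀ ∪ S₁ ∪ S₂) ⊆ (↑T : Set (BigV W × Bool)) := by
    rintro _ ⟨e, he, rfl⟩
    rcases he with (he | he) | he
    · exact hΦT 0 (by omega) e (hS₀sub he)
    · exact hΦT 1 (by omega) e (hS₁sub he)
    · exact hΦT 2 (by omega) e (hS₂sub he)
  have himcard : (Φ '' (S₀ ∪ S₁ ∪ S₂)).ncard = 12 := by
    rw [Set.ncard_image_of_injective _ hΦinj, hUcard]
  have hle : (Φ '' (S₀ ∪ S₁ ∪ S₂)).ncard ≤ T.card := by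
    rw [← Set.ncard_coe_finset T]
    exact Set.ncard_le_ncard himage T.finite_toSet
  have hTcard : T.card = 10 := by
    rw [hT, Finset.card_product,
      Finset.card_image_of_injective _ (fun a b h => by simpa using h),
      Finset.card_range, Finset.card_univ]
    simp
  omega
end

section
/- Let G(A,B) be a bipartite graph satisfying the double Hall property with both sides A and B infinite, where every vertex of B has only finitely many neighbors. Then there exists a subgraph H of G whose vertex set contains all of A and in which every vertex has degree exactly 2 (equivalently, a collection of pairwise disjoint 2-regular subgraphs of G covering all vertices of A). -/
/- ### Auxiliary material -/

namespace Stmt12Aux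

open Cardinal Set

variable {V : Type*}

/-- A quadruple of vertices meant to form a 4-cycle `a - b - a' - b' - a`. -/
structure Quad (V : Type*) where
  a : V
  a' : V
  b : V
  b' : V

def qverts (q : Quad V) : Set V := {q.a, q.a', q.b, q.b'}

lemma qverts_finite (q : Quad V) : (qverts q).Finite :=
  (Set.finite_singleton _).insert _ |>.insert _ |>.insert _

/-- Adjacency inside the 4-cycle determined by `q`. -/
def qAdj (q : Quad V) (x y : V) : Prop :=
  ((x = q.a ∨ x = q.a') ∧ (y = q.b ∨ y = q.b')) ∨
    ((y = q.a ∨ y = q.a') ∧ (x = q.b ∨ x = q.b'))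

lemma qAdj.symm {q : Quad V} {x y : V} (h : qAdj q x y) : qAdj q y x := Or.symm h

lemma qAdj_mem_left {q : Quad V} {x y : V} (h : qAdj q x y) : x ∈ qverts q := by
  rcases h with ⟨hx | hx, -⟩ | ⟨-, hx | hx⟩ <;> subst hx <;> simp [qverts]

/-- `q` is a good 4-cycle through `a` avoiding `U`. -/
def Good (G : SimpleGraph V) (A U : Set V) (a : V) (q : Quad V) : Prop :=
  q.a = a ∧ q.a' ∈ A ∧ q.a ≠ q.a' ∧ q.b ≠ q.b' ∧
    G.Adj q.a q.b ∧ G.Adj q.a q.b' ∧ G.Adj q.a' q.b ∧ G.Adj q.a' q.b' ∧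
    Disjoint (qverts q) U

lemma Good.adj {G : SimpleGraph V} {A U : Set V} {a : V} {q : Quad V}
    (hg : Good G A U a q) {x y : V} (h : qAdj q x y) : G.Adj x y := by
  obtain ⟨-, -, -, -, h1, h2, h3, h4, -⟩ := hg
  rcases h with ⟨hx | hx, hy | hy⟩ | ⟨hy | hy, hx | hx⟩ <;> subst hx <;> subst hy <;>
    first
      | exact h1 | exact h2 | exact h3 | exact h4
      | exact h1.symm | exact h2.symm | exact h3.symm | exact h4.symm

/-- The local neighbourhood inside a good quad is always a pair. -/
lemma Good.nbhd {G : SimpleGraph V} {A U : Set V} {a : V} {q : Quad V}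
    (hg : Good G A U a q) {v : V} (hv : v ∈ qverts q) :
    ∃ x y, x ≠ y ∧ {w | qAdj q v w} = {x, y} := by
  obtain ⟨-, -, haa, hbb, h1, h2, h3, h4, -⟩ := hg
  have nab : q.a ≠ q.b := h1.ne
  have nab' : q.a ≠ q.b' := h2.ne
  have na'b : q.a' ≠ q.b := h3.ne
  have na'b' : q.a' ≠ q.b' := h4.ne
  simp only [qverts, Set.mem_insert_iff, Set.mem_singleton_iff] at hv
  rcases hv with rfl | rfl | rfl | rfl
  · refine ⟨q.b, q.b', hbb, Set.ext fun w => ⟨?_, ?_⟩⟩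
    · rintro (⟨-, hy⟩ | ⟨-, hx | hx⟩)
      · simpa using hy
      · exact absurd hx nab
      · exact absurd hx nab'
    · intro hw
      exact Or.inl ⟨Or.inl rfl, by simpa using hw⟩
  · refine ⟨q.b, q.b', hbb, Set.ext fun w => ⟨?_, ?_⟩⟩
    · rintro (⟨-, hy⟩ | ⟨-, hx | hx⟩)
      · simpa using hy
      · exact absurd hx na'b
      · exact absurd hx na'b'
    · intro hw
      exact Or.inl ⟨Or.inr rfl, by simpa using hw⟩
  · refine ⟨q.a, q.a', haa, Set.ext fun w => ⟨?_, ?_⟩⟩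
    · rintro (⟨hx | hx, -⟩ | ⟨hy, -⟩)
      · exact absurd hx.symm nab
      · exact absurd hx.symm na'b
      · simpa using hy
    · intro hw
      exact Or.inr ⟨by simpa using hw, Or.inl rfl⟩
  · refine ⟨q.a, q.a', haa, Set.ext fun w => ⟨?_, ?_⟩⟩
    · rintro (⟨hx | hx, -⟩ | ⟨hy, -⟩)
      · exact absurd hx.symm nab'
      · exact absurd hx.symm na'b'
      · simpa using hy
    · intro hw
      exact Or.inr ⟨by simpa using hw, Or.inr rfl⟩

/-- Small unions of finite sets are small. -/
lemma mk_iUnion_lt {α ι : Type u} {c : Cardinal.{u}} (hc : ℵ₀ ≤ c)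
    (hι : #ι < c) (f : ι → Set α) (hf : ∀ i, (f i).Finite) : #(⋃ i, f i) < c := by
  by_cases h : Finite ι
  · have : (⋃ i, f i).Finite := Set.finite_iUnion hf
    have := this.to_subtype
    exact lt_of_lt_of_le (Cardinal.lt_aleph0_of_finite _) hc
  · have : Infinite ι := not_finite_iff_infinite.mp h
    have h1 : #(⋃ i, f i) ≤ #ι * ⨆ i, #(f i) := Cardinal.mk_iUnion_le f
    have h2 : (⨆ i, #(f i)) ≤ ℵ₀ := by
      refine ciSup_le' fun i => ?_
      have := (hf i).to_subtype
      exact (Cardinal.lt_aleph0_of_finite _).le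
    calc #(⋃ i, f i) ≤ #ι * ℵ₀ := h1.trans (mul_le_mul_right h2 _)
      _ = #ι := Cardinal.mul_aleph0_eq (Cardinal.aleph0_le_mk ι)
      _ < c := hι

lemma N2_pair {G : SimpleGraph V} {a a' v : V} (hv : v ∈ N2 G {a, a'}) :
    G.Adj v a ∧ G.Adj v a' := by
  obtain ⟨p, hp, r, hr, hpr, h1, h2⟩ := hv
  simp only [Set.mem_insert_iff, Set.mem_singleton_iff] at hp hr
  rcases hp with rfl | rfl <;> rcases hr with rfl | rfl <;>
    first
      | exact absurd rfl hpr
      | exact ⟨h1, h2⟩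
      | exact ⟨h2, h1⟩

/-- Any two distinct vertices of `A` have two distinct common neighbours. -/
lemma two_common {G : SimpleGraph V} {A : Set V} (hdhp : DHP G A)
    {a a' : V} (ha : a ∈ A) (ha' : a' ∈ A) (hne : a ≠ a') :
    ∃ b b', b ≠ b' ∧ G.Adj a b ∧ G.Adj a b' ∧ G.Adj a' b ∧ G.Adj a' b' := by
  have hsub : ({a, a'} : Set V) ⊆ A := by
    intro x hx
    rcases hx with rfl | hx
    · exact ha
    · rwa [Set.mem_singleton_iff.mp hx]
  have h2 : (2 : Cardinal) ≤ #({a, a'} : Set V) := by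
    rw [Cardinal.mk_insert (by simpa using hne), Cardinal.mk_singleton]
    norm_num
  have hle : (2 : Cardinal) ≤ #(N2 G {a, a'}) := h2.trans (hdhp.2 _ hsub h2)
  obtain ⟨x, y, hxy⟩ := Cardinal.two_le_iff.mp hle
  have hx := N2_pair x.2
  have hy := N2_pair y.2
  refine ⟨x, y, Subtype.coe_injective.ne hxy, hx.1.symm, hy.1.symm, hx.2.symm, hy.2.symm⟩

lemma adj_mem_B {G : SimpleGraph V} {A B : Set V} (hbip : BipartiteWith G A B)
    {v a : V} (ha : a ∈ A) (h : G.Adj v a) : v ∈ B := by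
  rcases hbip.2.2 h with ⟨hv, haB⟩ | ⟨hv, -⟩
  · exact absurd haB (Set.disjoint_left.mp hbip.2.1 ha)
  · exact hv

/-- The key extension lemma: through any vertex of `A` outside a small used set `U`
there is a good 4-cycle avoiding `U`. -/
lemma extend {G : SimpleGraph V} {A B : Set V} (hbip : BipartiteWith G A B)
    (hdhp : DHP G A) (hA : A.Infinite) (hlf : ∀ v ∈ B, (G.neighborSet v).Finite)
    {U : Set V} (hU : #U < #A) {a : V} (ha : a ∈ A) (haU : a ∉ U) :
    ∃ q : Quad V, Good G A U a q := by
  have hAinf : ℵ₀ ≤ #A := by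
    have := hA.to_subtype
    exact Cardinal.aleph0_le_mk _
  set N : Set V := ⋃ u : ↥(U ∩ B), G.neighborSet ↑u with hN
  have hNlt : #N < #A := by
    refine mk_iUnion_lt hAinf ?_ _ fun u => hlf _ u.2.2
    exact lt_of_le_of_lt (Cardinal.mk_le_mk_of_subset Set.inter_subset_left) hU
  set W : Set V := (U ∪ {a}) ∪ N with hWdef
  have hW : #W < #A := by
    refine lt_of_le_of_lt (Cardinal.mk_union_le _ _) (Cardinal.add_lt_of_lt hAinf ?_ hNlt)
    refine lt_of_le_of_lt (Cardinal.mk_union_le _ _) (Cardinal.add_lt_of_lt hAinf hU ?_)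
    rw [Cardinal.mk_singleton]
    exact lt_of_lt_of_le Cardinal.one_lt_aleph0 hAinf
  have hns : ¬ A ⊆ W := fun hsub =>
    absurd (Cardinal.mk_le_mk_of_subset hsub) (not_le.mpr hW)
  obtain ⟨a', ha'A, ha'W⟩ := Set.not_subset.mp hns
  simp only [hWdef, hN, Set.mem_union, Set.mem_singleton_iff, Set.mem_iUnion, not_or,
    not_exists] at ha'W
  obtain ⟨⟨ha'U, ha'a⟩, ha'N⟩ := ha'W
  obtain ⟨b, b', hbb', h1, h2, h3, h4⟩ := two_common hdhp ha ha'A (Ne.symm ha'a)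
  have hnotU : ∀ c : V, G.Adj a c → G.Adj a' c → c ∉ U := by
    intro c hca hca' hcU
    have hcB : c ∈ B := adj_mem_B hbip ha hca.symm
    exact ha'N ⟨c, hcU, hcB⟩ hca'.symm
  refine ⟨⟨a, a', b, b'⟩, rfl, ha'A, Ne.symm ha'a, hbb', h1, h2, h3, h4, ?_⟩
  rw [Set.disjoint_left]
  rintro x hx hxU
  simp only [qverts, Set.mem_insert_iff, Set.mem_singleton_iff] at hx
  rcases hx with rfl | rfl | rfl | rfl
  · exact haU hxU
  · exact ha'U hxU
  · exact hnotU _ h1 h3 hxU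
  · exact hnotU _ h2 h4 hxU

/-- Index type: the initial ordinal of `#A`. -/
abbrev Idx (A : Set V) : Type _ := (Cardinal.mk A).ord.ToType

open Classical in
/-- Choice of a good quad, if one exists. -/
noncomputable def pick (G : SimpleGraph V) (A U : Set V) (a : V) : Option (Quad V) :=
  if h : ∃ q, Good G A U a q then some h.choose else none

lemma pick_some {G : SimpleGraph V} {A U : Set V} {a : V} {q : Quad V}
    (h : pick G A U a = some q) : Good G A U a q := by
  unfold pick at h
  split at h
  · rename_i hex
    cases h
    exact hex.choose_spec
  · exact absurd h (by simp)

lemma pick_eq_some_of_ex {G : SimpleGraph V} {A U : Set V} {a : V}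
    (h : ∃ q, Good G A U a q) : ∃ q, pick G A U a = some q :=
  ⟨h.choose, dif_pos h⟩

def mverts : Option (Quad V) → Set V
  | none => ∅
  | some q => qverts q

lemma mverts_finite (o : Option (Quad V)) : (mverts o).Finite := by
  cases o
  · exact Set.finite_empty
  · exact qverts_finite _

/-- The transfinite greedy construction. -/
noncomputable def F (G : SimpleGraph V) (A : Set V) (e : Idx A → V) :
    Idx A → Option (Quad V) :=
  (wellFounded_lt (α := Idx A)).fix fun i prev =>
    pick G A (⋃ j : Set.Iio i, mverts (prev j j.2)) (e i)

/-- The set of vertices used before step `i`. -/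
def Uset (G : SimpleGraph V) (A : Set V) (e : Idx A → V) (i : Idx A) : Set V :=
  ⋃ j : Set.Iio i, mverts (F G A e j)

lemma F_eq (G : SimpleGraph V) (A : Set V) (e : Idx A → V) (i : Idx A) :
    F G A e i = pick G A (Uset G A e i) (e i) := by
  rw [F, WellFounded.fix_eq]
  rfl

lemma Uset_lt {G : SimpleGraph V} {A : Set V} (hA : A.Infinite)
    (e : Idx A → V) (i : Idx A) : #(Uset G A e i) < #A := by
  have hAinf : ℵ₀ ≤ #A := by
    have := hA.to_subtype
    exact Cardinal.aleph0_le_mk _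
  refine mk_iUnion_lt hAinf ?_ _ fun j => mverts_finite _
  exact Cardinal.mk_Iio_ord_toType i

end Stmt12Aux

open Stmt12Aux Cardinal Set in
theorem stmt12 {V : Type*} (G : SimpleGraph V) (A B : Set V)
    (hbip : BipartiteWith G A B) (hdhp : DHP G A)
    (hA : A.Infinite) (hB : B.Infinite)
    (hlf : ∀ v ∈ B, (G.neighborSet v).Finite) :
    ∃ H : G.Subgraph, A ⊆ H.verts ∧ ∀ v ∈ H.verts, DegEq2 H v := by
  classical
  -- an enumeration of `A` by its initial ordinal
  obtain ⟨ee⟩ : Nonempty (Idx A ≃ ↥A) :=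
    Cardinal.eq.mp (Cardinal.mk_ord_toType (Cardinal.mk A))
  set e : Idx A → V := fun i => ↑(ee i) with he
  have heA : ∀ i, e i ∈ A := fun i => (ee i).2
  -- the good quads chosen by the construction
  have good : ∀ i q, F G A e i = some q → Good G A (Uset G A e i) (e i) q := by
    intro i q hq
    rw [F_eq] at hq
    exact pick_some hq
  -- pairwise disjointness of chosen quads
  have disj : ∀ i j, i < j → ∀ q q', F G A e i = some q → F G A e j = some q' →
      Disjoint (qverts q) (qverts q') := by
    intro i j hij q q' hi hj
    have hsub : qverts q ⊆ Uset G A e j := by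
      have : mverts (F G A e i) ⊆ Uset G A e j :=
        Set.subset_iUnion (fun k : Set.Iio j => mverts (F G A e ↑k)) ⟨i, hij⟩
      rw [hi] at this
      exact this
    exact (((good j q' hj).2.2.2.2.2.2.2.2).mono_right hsub).symm
  have disj' : ∀ i j, i ≠ j → ∀ q q', F G A e i = some q → F G A e j = some q' →
      Disjoint (qverts q) (qverts q') := by
    intro i j hij q q' hi hj
    rcases lt_or_gt_of_ne hij with h | h
    · exact disj i j h q q' hi hj
    · exact (disj j i h q' q hj hi).symm
  -- the subgraph
  refine ⟨⟨⋃ i, mverts (F G A e i), fun x y => ∃ i q, F G A e i = some q ∧ qAdj q x y,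
      ?_, ?_, ?_⟩, ?_, ?_⟩
  · rintro x y ⟨i, q, hq, hadj⟩
    exact (good i q hq).adj hadj
  · rintro x y ⟨i, q, hq, hadj⟩
    refine Set.mem_iUnion.mpr ⟨i, ?_⟩
    rw [hq]
    exact qAdj_mem_left hadj
  · constructor; rintro x y ⟨i, q, hq, hadj⟩
    exact ⟨i, q, hq, hadj.symm⟩
  · -- coverage of A
    intro a ha
    have : ∃ i, e i = a := ⟨ee.symm ⟨a, ha⟩, by simp [he]⟩
    obtain ⟨i, rfl⟩ := this
    rcases hcov : F G A e i with _ | q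
    · -- pick failed, so `e i` must already be used
      by_contra hnot
      have hei : e i ∉ Uset G A e i := by
        intro hmem
        refine hnot ?_
        simp only [SimpleGraph.Subgraph.verts]
        obtain ⟨j, hmem'⟩ := Set.mem_iUnion.mp hmem
        exact Set.mem_iUnion.mpr ⟨↑j, hmem'⟩
      obtain ⟨q, hq⟩ := pick_eq_some_of_ex
        (extend hbip hdhp hA hlf (Uset_lt hA e i) (heA i) hei)
      rw [F_eq, hq] at hcov
      exact Option.some_ne_none q hcov
    · have hmem : e i ∈ qverts q := by
        have := (good i q hcov).1
        simp [qverts, ← this]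
      refine Set.mem_iUnion.mpr ⟨i, ?_⟩
      rw [hcov]
      exact hmem
  · -- degrees
    rintro v hv
    simp only [SimpleGraph.Subgraph.verts] at hv
    obtain ⟨i, hvi⟩ := Set.mem_iUnion.mp hv
    rcases hFi : F G A e i with _ | q
    · rw [hFi] at hvi
      exact absurd hvi (Set.notMem_empty v)
    · rw [hFi] at hvi
      have hvq : v ∈ qverts q := hvi
      obtain ⟨x, y, hxy, hset⟩ := (good i q hFi).nbhd hvq
      refine ⟨x, y, hxy, ?_⟩
      rw [← hset]
      ext w
      simp only [SimpleGraph.Subgraph.mem_neighborSet, Set.mem_setOf_eq]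
      constructor
      · rintro ⟨j, q', hq', hadj⟩
        rcases eq_or_ne i j with rfl | hij
        · rw [hFi] at hq'
          cases hq'
          exact hadj
        · exact absurd hvq
            (Set.disjoint_left.mp (disj' j i hij.symm q' q hq' hFi) (qAdj_mem_left hadj))
      · intro hadj
        exact ⟨i, q, hFi, hadj⟩
end

section
/- Let G(A,B) be a bipartite graph satisfying the double Hall property with both sides A and B infinite. Suppose that for each vertex v ∈ B either the neighborhood N(v) is finite or N(v) = A \ F_v for some finite set F_v ⊆ A, and that the set B' = {v ∈ B : N(v) is cofinite in A} is finite. Then the set of vertices of A that are pseudo-isolated in G is finite. -/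
/-- A vertex `v` is pseudo-isolated if some finite set `F` of other vertices can be
deleted so that no remaining vertex is at distance exactly 2 from `v` in `G \ F`. -/
def PseudoIsolated {V : Type*} (G : SimpleGraph V) (v : V) : Prop :=
  ∃ F : Set V, F.Finite ∧ v ∉ F ∧
    ¬ ∃ w, w ∉ F ∧ w ≠ v ∧ ¬ G.Adj v w ∧ ∃ u, u ∉ F ∧ G.Adj v u ∧ G.Adj u w


theorem stmt15 {V : Type*} (G : SimpleGraph V) (A B : Set V)
    (hbip : BipartiteWith G A B) (hdhp : DHP G A)
    (hA : A.Infinite) (hB : B.Infinite)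
    (hdeg : ∀ v ∈ B, (G.neighborSet v).Finite ∨
      ∃ F : Set V, F ⊆ A ∧ F.Finite ∧ G.neighborSet v = A \ F)
    (hB' : {v ∈ B | ∃ F : Set V, F ⊆ A ∧ F.Finite ∧
      G.neighborSet v = A \ F}.Finite) :
    {v ∈ A | PseudoIsolated G v}.Finite := by
  classical
  set B' : Set V := {v ∈ B | ∃ F : Set V, F ⊆ A ∧ F.Finite ∧
      G.neighborSet v = A \ F} with hB'eq
  by_contra hfin
  rw [← Set.not_infinite, not_not] at hfin
  have hAB : Disjoint A B := hbip.2.1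
  -- adjacency from A lands in B
  have hadjB : ∀ {x u : V}, x ∈ A → G.Adj x u → u ∈ B := by
    intro x u hx hadj
    rcases hbip.2.2 hadj with ⟨_, h⟩ | ⟨h, _⟩
    · exact h
    · exact absurd hx (Set.disjoint_right.mp hAB h)
  have hnoAA : ∀ {x u : V}, x ∈ A → u ∈ A → ¬ G.Adj x u := by
    intro x u hx hu hadj
    exact Set.disjoint_left.mp hAB hu (hadjB hx hadj)
  -- F0 : union of complements of neighborhoods of B' vertices
  set F0 : Set V := ⋃ u ∈ hB'.toFinset, (A \ G.neighborSet u) with hF0eq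
  have hF0fin : F0.Finite := by
    apply Set.Finite.biUnion (hB'.toFinset).finite_toSet
    intro u hu
    obtain ⟨-, F, hFA, hFfin, hNu⟩ := hB'.mem_toFinset.mp (Finset.mem_coe.mp hu)
    rw [hNu, Set.diff_diff_cancel_left hFA]
    exact hFfin
  have hF0adj : ∀ v ∈ A, v ∉ F0 → ∀ u ∈ B', G.Adj u v := by
    intro v hvA hvF0 u huB'
    have hu : u ∈ hB'.toFinset := hB'.mem_toFinset.mpr huB'
    have : v ∉ A \ G.neighborSet u := fun h => hvF0 (Set.mem_biUnion hu h)
    have : v ∈ G.neighborSet u := by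
      by_contra h
      exact this ⟨hvA, h⟩
    exact this
  -- key lemma
  have key : ∀ v : V, ∃ D : Set V, D.Finite ∧ (v ∈ A → PseudoIsolated G v → v ∉ F0 →
      ∀ w ∈ A, w ∉ D → w ∉ F0 →
        G.neighborSet v ∩ G.neighborSet w = B') := by
    intro v
    by_cases hpi : PseudoIsolated G v
    · obtain ⟨F, hFfin, hvF, hno⟩ := hpi
      refine ⟨F ∪ {v} ∪ ⋃ u ∈ hFfin.toFinset,
        (if h : (G.neighborSet u).Finite then G.neighborSet u else (∅ : Set V)), ?_, ?_⟩
      · apply Set.Finite.union (hFfin.union (Set.finite_singleton v))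
        apply Set.Finite.biUnion (hFfin.toFinset).finite_toSet
        intro u _
        split_ifs with h
        · exact h
        · exact Set.finite_empty
      · intro hvA _ hvF0 w hwA hwD hwF0
        have hwF : w ∉ F := fun h => hwD (Or.inl (Or.inl h))
        have hwv : w ≠ v := fun h => hwD (Or.inl (Or.inr h))
        ext u
        constructor
        · rintro ⟨hu1, hu2⟩
          rw [SimpleGraph.mem_neighborSet] at hu1 hu2
          have huB : u ∈ B := hadjB hvA hu1
          have hnadj : ¬ G.Adj v w := hnoAA hvA hwA
          have huF : u ∈ F := by
            by_contra huF
            exact hno ⟨w, hwF, hwv, hnadj, u, huF, hu1, hu2.symm⟩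
          rcases hdeg u huB with hNfin | hNcof
          · exfalso
            apply hwD
            refine Or.inr (Set.mem_biUnion (hFfin.mem_toFinset.mpr huF) ?_)
            rw [dif_pos hNfin]
            exact hu2.symm
          · exact ⟨huB, hNcof⟩
        · intro huB'
          have h1 : G.Adj u v := hF0adj v hvA hvF0 u huB'
          have h2 : G.Adj u w := hF0adj w hwA hwF0 u huB'
          exact ⟨h1.symm, h2.symm⟩
    · exact ⟨∅, Set.finite_empty, fun _ h => absurd h hpi⟩
  choose Dv hDfin hDspec using key
  set Q : Set V := {v ∈ A | PseudoIsolated G v} \ F0 with hQeq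
  have hQinf : Q.Infinite := hfin.diff hF0fin
  have hpair : ∀ v ∈ Q, ∀ w ∈ Q, w ∉ Dv v →
      G.neighborSet v ∩ G.neighborSet w = B' := by
    intro v hv w hw hwD
    exact hDspec v hv.1.1 hv.1.2 hv.2 w hw.1.1 hwD hw.2
  -- greedy construction
  have main : ∀ n : ℕ, ∃ S : Finset V, S.card = n ∧ ↑S ⊆ Q ∧
      ∀ v ∈ S, ∀ w ∈ S, v ≠ w → G.neighborSet v ∩ G.neighborSet w = B' := by
    intro n
    induction n with
    | zero => exact ⟨∅, rfl, by simp, by simp⟩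
    | succ n ih =>
      obtain ⟨S, hcard, hSQ, hSpair⟩ := ih
      have hbig : (Q \ (↑S ∪ ⋃ v ∈ S, Dv v)).Infinite := by
        apply hQinf.diff
        exact (S.finite_toSet).union (S.finite_toSet.biUnion fun v _ => hDfin v)
      obtain ⟨x, hxQ, hxnot⟩ := hbig.nonempty
      have hxS : x ∉ S := fun h => hxnot (Or.inl h)
      have hxD : ∀ v ∈ S, x ∉ Dv v := fun v hv h =>
        hxnot (Or.inr (Set.mem_biUnion hv h))
      refine ⟨insert x S, by rw [Finset.card_insert_of_notMem hxS, hcard], ?_, ?_⟩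
      · intro y hy
        rcases Finset.mem_coe.mp hy |> Finset.mem_insert.mp with rfl | hyS
        · exact hxQ
        · exact hSQ hyS
      · intro v hv w hw hne
        rcases Finset.mem_insert.mp hv with rfl | hvS
        · rcases Finset.mem_insert.mp hw with rfl | hwS
          · exact absurd rfl hne
          · rw [Set.inter_comm]
            exact hpair w (hSQ hwS) v hxQ (hxD w hwS)
        · rcases Finset.mem_insert.mp hw with rfl | hwS
          · exact hpair v (hSQ hvS) w hxQ (hxD v hvS)
          · exact hSpair v hvS w hwS hne
  -- contradiction with DHP
  obtain ⟨S, hcard, hSQ, hSpair⟩ := main (hB'.toFinset.card + 2)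
  have hXA : (↑S : Set V) ⊆ A := fun v hv => (hSQ hv).1.1
  have hmkS : Cardinal.mk (↑S : Set V) = (S.card : Cardinal) := Cardinal.mk_coe_finset
  have h2 : 2 ≤ Cardinal.mk (↑S : Set V) := by
    rw [hmkS, hcard]
    exact_mod_cast Nat.le_add_left 2 _
  have hle := hdhp.2 ↑S hXA h2
  have hsub : N2 G ↑S ⊆ B' := by
    rintro u ⟨x, hx, y, hy, hxy, hux, huy⟩
    have h := hSpair x (Finset.mem_coe.mp hx) y (Finset.mem_coe.mp hy) hxy
    rw [← h]
    exact ⟨hux.symm, huy.symm⟩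
  have hle2 : Cardinal.mk (N2 G ↑S) ≤ Cardinal.mk B' :=
    Cardinal.mk_le_mk_of_subset hsub
  have hmkB' : Cardinal.mk B' = (hB'.toFinset.card : Cardinal) := by
    rw [← Cardinal.mk_coe_finset]
    congr 1
    exact congrArg _ (hB'.coe_toFinset).symm
  have hfinal : ((hB'.toFinset.card + 2 : ℕ) : Cardinal) ≤ (hB'.toFinset.card : Cardinal) := by
    calc ((hB'.toFinset.card + 2 : ℕ) : Cardinal) = Cardinal.mk (↑S : Set V) := by
          rw [hmkS, hcard]
      _ ≤ Cardinal.mk (N2 G ↑S) := hle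
      _ ≤ Cardinal.mk B' := hle2
      _ = (hB'.toFinset.card : Cardinal) := hmkB'
  have : hB'.toFinset.card + 2 ≤ hB'.toFinset.card := by exact_mod_cast hfinal
  omega
end

section
/- Consider the bipartite graph G with sides A = {v_i : i ∈ ℕ} and B = {u_i : i ∈ ℕ}, where v_0 and v_1 are adjacent to every u_i, and for each j ≥ 2 the vertex v_j is adjacent to exactly u_0, u_1, …, u_{j−1}. Then G satisfies the double Hall property. -/
/-- `v_i` (left copy) is adjacent to `u_j` (right copy) iff `i ≤ 1`, or `i ≥ 2` and
`j ≤ i - 1`. -/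
def ExRel : ℕ ⊕ ℕ → ℕ ⊕ ℕ → Prop
  | Sum.inl i, Sum.inr j => i ≤ 1 ∨ (2 ≤ i ∧ j ≤ i - 1)
  | _, _ => False

def Gex : SimpleGraph (ℕ ⊕ ℕ) := SimpleGraph.fromRel ExRel

lemma gex_adj (a j : ℕ) (h : a ≤ 1 ∨ 2 ≤ a ∧ j ≤ a - 1) :
    Gex.Adj (Sum.inr j) (Sum.inl a) := by
  simp [Gex, SimpleGraph.fromRel_adj, ExRel]
  exact h

theorem stmt16 : DHP Gex (Set.range Sum.inl) := by
  constructor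
  · rw [Cardinal.mk_range_eq _ Sum.inl_injective, Cardinal.mk_nat]
    exact_mod_cast le_of_lt (Cardinal.nat_lt_aleph0 2)
  intro X hXA hX2
  set S : Set ℕ := Sum.inl ⁻¹' X with hSdef
  have hX : X = Sum.inl '' S := by
    ext v
    constructor
    · intro hv
      obtain ⟨i, rfl⟩ := hXA hv
      exact ⟨i, hv, rfl⟩
    · rintro ⟨i, hi, rfl⟩
      exact hi
  have hmk : Cardinal.mk X = Cardinal.mk S := by
    rw [hX, Cardinal.mk_image_eq Sum.inl_injective]
  by_cases hfin : S.Finite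
  · -- finite case
    set k := hfin.toFinset.card with hkdef
    have hmkS : Cardinal.mk S = (k : Cardinal) := by
      have h := Cardinal.mk_coe_finset (s := hfin.toFinset)
      exact (Cardinal.mk_congr (Equiv.subtypeEquivRight
        (fun x => (hfin.mem_toFinset (a := x)).symm))).trans h
    have hk2 : 2 ≤ k := by
      have := hX2
      rw [hmk, hmkS] at this
      exact_mod_cast this
    -- at least two "good" elements: ≤ 1 or ≥ k
    have hgood : ∃ a ∈ S, ∃ b ∈ S, a ≠ b ∧ (a ≤ 1 ∨ k ≤ a) ∧ (b ≤ 1 ∨ k ≤ b) := by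
      set T := hfin.toFinset
      have hbad : (T.filter (fun x => ¬(x ≤ 1 ∨ k ≤ x))).card ≤ k - 2 := by
        have hsub : T.filter (fun x => ¬(x ≤ 1 ∨ k ≤ x)) ⊆ Finset.Ico 2 k := by
          intro x hx
          simp only [Finset.mem_filter, not_or, not_le] at hx
          exact Finset.mem_Ico.2 ⟨hx.2.1, hx.2.2⟩
        calc (T.filter (fun x => ¬(x ≤ 1 ∨ k ≤ x))).card ≤ (Finset.Ico 2 k).card :=
              Finset.card_le_card hsub
          _ = k - 2 := Nat.card_Ico 2 k
      have hsum := Finset.card_filter_add_card_filter_not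
        (s := T) (p := fun x => x ≤ 1 ∨ k ≤ x)
      have hgc : 2 ≤ (T.filter (fun x => x ≤ 1 ∨ k ≤ x)).card := by omega
      obtain ⟨a, ha, b, hb, hab⟩ := Finset.one_lt_card.1 (by omega :
        1 < (T.filter (fun x => x ≤ 1 ∨ k ≤ x)).card)
      simp only [Finset.mem_filter, Set.Finite.mem_toFinset, T] at ha hb
      exact ⟨a, ha.1, b, hb.1, hab, ha.2, hb.2⟩
    obtain ⟨a, ha, b, hb, hab, hga, hgb⟩ := hgood
    have hsub : Sum.inr '' Set.Iio k ⊆ N2 Gex X := by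
      rintro _ ⟨j, hj, rfl⟩
      rw [Set.mem_Iio] at hj
      refine ⟨Sum.inl a, ha, Sum.inl b, hb, by simp [hab], ?_, ?_⟩
      · refine gex_adj a j ?_
        rcases hga with h | h
        · exact Or.inl h
        · exact Or.inr ⟨by omega, by omega⟩
      · refine gex_adj b j ?_
        rcases hgb with h | h
        · exact Or.inl h
        · exact Or.inr ⟨by omega, by omega⟩
    have hmkIio : Cardinal.mk (Sum.inr '' Set.Iio k : Set (ℕ ⊕ ℕ)) = (k : Cardinal) := by
      rw [Cardinal.mk_image_eq Sum.inr_injective, ← Finset.coe_range]; simp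
    calc Cardinal.mk X = (k : Cardinal) := by rw [hmk, hmkS]
      _ = Cardinal.mk (Sum.inr '' Set.Iio k : Set (ℕ ⊕ ℕ)) := hmkIio.symm
      _ ≤ Cardinal.mk (N2 Gex X) := Cardinal.mk_le_mk_of_subset hsub
  · -- infinite case
    have hinf : S.Infinite := hfin
    have hsub : Set.range Sum.inr ⊆ N2 Gex X := by
      rintro _ ⟨j, rfl⟩
      obtain ⟨a, ha, haj⟩ := hinf.exists_gt (j + 1)
      obtain ⟨b, hb, hba⟩ := hinf.exists_gt a
      refine ⟨Sum.inl a, ha, Sum.inl b, hb, by simp [Nat.ne_of_lt hba], ?_, ?_⟩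
      · exact gex_adj a j (Or.inr ⟨by omega, by omega⟩)
      · exact gex_adj b j (Or.inr ⟨by omega, by omega⟩)
    calc Cardinal.mk X ≤ Cardinal.aleph0 := Cardinal.mk_le_aleph0
      _ = Cardinal.mk (Set.range Sum.inr : Set (ℕ ⊕ ℕ)) := by
          rw [Cardinal.mk_range_eq _ Sum.inr_injective, Cardinal.mk_nat]
      _ ≤ Cardinal.mk (N2 Gex X) := Cardinal.mk_le_mk_of_subset hsub
end

section
/- There exists a countably infinite bipartite graph G(A,B) satisfying the double Hall property, with both sides A and B infinite, such that all vertices of A except exactly two have finite degree, every vertex of B has infinite degree, and G admits no A-perfect matching (and hence no family of pairwise disjoint cycles covering all vertices of A). -/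
namespace Stmt18Aux

/-- `inl n` is adjacent to `inr j` iff `n ≤ 1` (the two hubs) or `j < n`. -/
def P (n j : ℕ) : Prop := n ≤ 1 ∨ j < n

def myG : SimpleGraph (ℕ ⊕ ℕ) where
  Adj x y :=
    match x, y with
    | Sum.inl n, Sum.inr j => P n j
    | Sum.inr j, Sum.inl n => P n j
    | _, _ => False
  symm := ⟨by rintro (n | n) (m | m) h <;> exact h⟩
  loopless := ⟨by rintro (n | n) h <;> exact h⟩

lemma adj_lr {n j : ℕ} : myG.Adj (Sum.inl n) (Sum.inr j) ↔ P n j := Iff.rfl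

lemma not_adj_ll {n m : ℕ} : ¬ myG.Adj (Sum.inl n) (Sum.inl m) := fun h => h

/-- A finset of naturals all of whose elements are `≥ 2` has max at least `card + 1`. -/
lemma max'_ge (T : Finset ℕ) (hT : T.Nonempty) (h2 : ∀ n ∈ T, 2 ≤ n) :
    T.card + 1 ≤ T.max' hT := by
  have hsub : T ⊆ Finset.Icc 2 (T.max' hT) :=
    fun n hn => Finset.mem_Icc.2 ⟨h2 n hn, T.le_max' n hn⟩
  have h := Finset.card_le_card hsub
  rw [Nat.card_Icc] at h
  have hm2 : 2 ≤ T.max' hT := h2 _ (T.max'_mem hT)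
  omega

end Stmt18Aux

open Stmt18Aux

theorem stmt18 : ∃ (V : Type) (G : SimpleGraph V) (A B : Set V),
    Countable V ∧ Infinite V ∧ BipartiteWith G A B ∧ DHP G A ∧
    A.Infinite ∧ B.Infinite ∧
    (∃ a b : V, a ≠ b ∧ {v ∈ A | (G.neighborSet v).Infinite} = {a, b}) ∧
    (∀ v ∈ B, (G.neighborSet v).Infinite) ∧
    ¬ ∃ M : G.Subgraph, M.IsMatching ∧ A ⊆ M.verts := by
  refine ⟨ℕ ⊕ ℕ, myG, Set.range Sum.inl, Set.range Sum.inr, inferInstance, inferInstance,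
    ?_, ?_, ?_, ?_, ?_, ?_, ?_⟩
  · -- BipartiteWith
    refine ⟨fun v => ?_, ?_, ?_⟩
    · cases v with
      | inl n => exact Or.inl ⟨n, rfl⟩
      | inr j => exact Or.inr ⟨j, rfl⟩
    · rw [Set.disjoint_left]
      rintro _ ⟨n, rfl⟩ ⟨m, h⟩
      exact Sum.inl_ne_inr h.symm
    · rintro (n | n) (m | m) h
      · exact absurd h not_adj_ll
      · exact Or.inl ⟨⟨n, rfl⟩, ⟨m, rfl⟩⟩
      · exact Or.inr ⟨⟨n, rfl⟩, ⟨m, rfl⟩⟩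
      · exact absurd h (fun h => h)
  · -- DHP
    constructor
    · have : Infinite (Set.range (Sum.inl : ℕ → ℕ ⊕ ℕ)) := by
        rw [Set.infinite_coe_iff]
        exact Set.infinite_range_of_injective Sum.inl_injective
      calc (2 : Cardinal) ≤ Cardinal.aleph0 := by
            exact_mod_cast (Cardinal.nat_lt_aleph0 2).le
        _ ≤ _ := Cardinal.aleph0_le_mk _
    intro X hXA hX2
    -- key lemmas
    have keyInf : (∀ j : ℕ, Sum.inr j ∈ N2 myG X) → Cardinal.mk X ≤ Cardinal.mk (N2 myG X) := by
      intro h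
      have hinf : Infinite (N2 myG X) := by
        rw [Set.infinite_coe_iff]
        exact Set.infinite_of_injective_forall_mem (f := fun j : ℕ => Sum.inr j)
          Sum.inr_injective h
      calc Cardinal.mk X ≤ Cardinal.aleph0 := Cardinal.mk_le_aleph0
        _ ≤ _ := Cardinal.aleph0_le_mk _
    have key : ∀ Mx : ℕ, (∀ j < Mx, Sum.inr j ∈ N2 myG X) →
        (Mx : Cardinal) ≤ Cardinal.mk (N2 myG X) := by
      intro Mx h
      have hinj : Function.Injective
          (fun j : Fin Mx => (⟨Sum.inr j.1, h j.1 j.2⟩ : N2 myG X)) := by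
        intro a b hab
        simpa [Fin.val_inj] using hab
      calc (Mx : Cardinal) = Cardinal.mk (Fin Mx) := by simp
        _ ≤ _ := Cardinal.mk_le_of_injective hinj
    set Y : Set ℕ := Sum.inl ⁻¹' X with hY
    have hXY : X = Sum.inl '' Y := by
      ext v
      constructor
      · intro hv
        obtain ⟨n, rfl⟩ := hXA hv
        exact ⟨n, hv, rfl⟩
      · rintro ⟨n, hn, rfl⟩
        exact hn
    have hmkXY : Cardinal.mk X = Cardinal.mk Y := by
      rw [hXY]; exact Cardinal.mk_image_eq Sum.inl_injective
    by_cases hfin : X.Finite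
    · -- X finite
      have hYfin : Y.Finite := hfin.preimage Sum.inl_injective.injOn
      set T : Finset ℕ := hYfin.toFinset with hT
      have hmemT : ∀ n, n ∈ T ↔ Sum.inl n ∈ X := fun n => Set.Finite.mem_toFinset _
      have hmkY : Cardinal.mk Y = (T.card : Cardinal) := by
        have h := Cardinal.mk_coe_finset (s := hYfin.toFinset)
        exact (Cardinal.mk_congr (Equiv.subtypeEquivRight
          (fun x => (hYfin.mem_toFinset (a := x)).symm))).trans h
      have hcard2 : 2 ≤ T.card := by
        rw [hmkXY, hmkY] at hX2
        exact_mod_cast hX2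
      rw [hmkXY, hmkY]
      by_cases h01 : 0 ∈ T ∧ 1 ∈ T
      · -- both hubs in X : every b in N2
        rw [← hmkY, ← hmkXY]
        apply keyInf
        intro j
        refine ⟨Sum.inl 0, (hmemT 0).1 h01.1, Sum.inl 1, (hmemT 1).1 h01.2, by simp, ?_, ?_⟩
        · exact Or.inl (by norm_num)
        · exact Or.inl (by norm_num)
      · -- at most one hub
        set T' : Finset ℕ := T.filter (fun n => 2 ≤ n) with hT'
        have hTbcard : (T \ T').card ≤ 1 := by
          by_contra h
          push_neg at h
          have hsub : T \ T' ⊆ ({0, 1} : Finset ℕ) := by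
            intro n hn
            rw [hT'] at hn
            simp only [Finset.mem_sdiff, Finset.mem_filter, not_and, not_le] at hn
            have : n < 2 := hn.2 hn.1
            simp only [Finset.mem_insert, Finset.mem_singleton]
            omega
          have hle : ({0, 1} : Finset ℕ).card = 2 := rfl
          have heq : T \ T' = ({0, 1} : Finset ℕ) :=
            Finset.eq_of_subset_of_card_le hsub (by omega)
          have h0 : (0 : ℕ) ∈ T \ T' := by rw [heq]; simp
          have h1 : (1 : ℕ) ∈ T \ T' := by rw [heq]; simp
          exact h01 ⟨(Finset.mem_sdiff.1 h0).1, (Finset.mem_sdiff.1 h1).1⟩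
        have hsplit : (T \ T').card + T'.card = T.card :=
          Finset.card_sdiff_add_card_eq_card (hT' ▸ Finset.filter_subset _ _)
        have hT'card : T.card - 1 ≤ T'.card := by omega
        have hT'2 : ∀ n ∈ T', 2 ≤ n := fun n hn => (Finset.mem_filter.1 hn).2
        have hT'ne : T'.Nonempty := Finset.card_pos.1 (by omega)
        by_cases hs : ∃ s ∈ T, s < 2
        · -- one hub present
          obtain ⟨s, hsT, hs2⟩ := hs
          set m := T'.max' hT'ne with hm
          have hmT : m ∈ T' := T'.max'_mem hT'ne
          have hmge : T'.card + 1 ≤ m := max'_ge T' hT'ne hT'2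
          refine le_trans ?_ (key m fun j hj => ?_)
          · exact_mod_cast by omega
          · refine ⟨Sum.inl s, (hmemT s).1 hsT,
              Sum.inl m, (hmemT m).1 ((Finset.filter_subset _ _) hmT), ?_, ?_, ?_⟩
            · simp only [ne_eq, Sum.inl.injEq]
              have := hT'2 m hmT
              omega
            · exact Or.inl (by omega)
            · exact Or.inr hj
        · -- no hub : all elements ≥ 2
          push_neg at hs
          have hTall : ∀ n ∈ T, 2 ≤ n := fun n hn => hs n hn
          have hTne : T.Nonempty := Finset.card_pos.1 (by omega)
          set m := T.max' hTne with hm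
          set T2 := T.erase m with hT2
          have hT2ne : T2.Nonempty := by
            rw [hT2]
            rw [← Finset.card_pos, Finset.card_erase_of_mem (T.max'_mem hTne)]
            omega
          set m' := T2.max' hT2ne with hm'
          have hm'T2 : m' ∈ T2 := T2.max'_mem hT2ne
          have hm'T : m' ∈ T := Finset.mem_of_mem_erase hm'T2
          have hm'lt : m' < m :=
            lt_of_le_of_ne (T.le_max' m' hm'T) (Finset.ne_of_mem_erase hm'T2)
          have hm'ge : T2.card + 1 ≤ m' :=
            max'_ge T2 hT2ne (fun n hn => hTall n (Finset.mem_of_mem_erase hn))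
          have hT2card : T2.card = T.card - 1 := Finset.card_erase_of_mem (T.max'_mem hTne)
          refine le_trans ?_ (key m' fun j hj => ?_)
          · exact_mod_cast by omega
          · refine ⟨Sum.inl m', (hmemT m').1 hm'T,
              Sum.inl m, (hmemT m).1 (T.max'_mem hTne), ?_, ?_, ?_⟩
            · simp only [ne_eq, Sum.inl.injEq]
              omega
            · exact Or.inr hj
            · exact Or.inr (by omega)
    · -- X infinite
      apply keyInf
      intro j
      have hYinf : Y.Infinite := by
        intro hYfin
        exact hfin (hXY ▸ hYfin.image _)
      have : (Y \ Set.Iic j).Infinite := hYinf.diff (Set.finite_Iic j)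
      obtain ⟨n₁, hn₁, n₂, hn₂, hne⟩ := this.nontrivial
      refine ⟨Sum.inl n₁, hn₁.1, Sum.inl n₂, hn₂.1, by simp [hne], ?_, ?_⟩
      · exact Or.inr (by have := hn₁.2; simp at this; omega)
      · exact Or.inr (by have := hn₂.2; simp at this; omega)
  · exact Set.infinite_range_of_injective Sum.inl_injective
  · exact Set.infinite_range_of_injective Sum.inr_injective
  · -- exactly two infinite-degree vertices in A
    refine ⟨Sum.inl 0, Sum.inl 1, by simp, ?_⟩
    ext v
    simp only [Set.mem_setOf_eq, Set.mem_insert_iff, Set.mem_singleton_iff]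
    constructor
    · rintro ⟨⟨n, rfl⟩, hinf⟩
      by_contra h
      push_neg at h
      have hn2 : 2 ≤ n := by
        rcases Nat.lt_or_ge n 2 with h' | h'
        · interval_cases n
          · exact absurd rfl h.1
          · exact absurd rfl h.2
        · exact h'
      apply hinf
      have hsub : myG.neighborSet (Sum.inl n) ⊆ Sum.inr '' Set.Iio n := by
        rintro (m | m) hw
        · exact absurd hw (not_adj_ll (n := n) (m := m))
        · rcases hw with h' | h'
          · omega
          · exact ⟨m, h', rfl⟩
      exact Set.Finite.subset ((Set.finite_Iio n).image _) hsub
    · intro h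
      have hP : ∀ n : ℕ, n ≤ 1 → (myG.neighborSet (Sum.inl n)).Infinite := by
        intro n hn
        exact Set.infinite_of_injective_forall_mem (f := fun j : ℕ => Sum.inr j)
          Sum.inr_injective (fun j => Or.inl hn)
      rcases h with rfl | rfl
      · exact ⟨⟨0, rfl⟩, hP 0 (by norm_num)⟩
      · exact ⟨⟨1, rfl⟩, hP 1 le_rfl⟩
  · -- every b has infinite degree
    rintro _ ⟨j, rfl⟩
    exact Set.infinite_of_injective_forall_mem (f := fun n : ℕ => Sum.inl (j + 1 + n))
      (fun a b hab => by simpa using hab) (fun n => Or.inr (by omega))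
  · -- no A-perfect matching
    rintro ⟨M, hM, hA⟩
    have partner : ∀ n : ℕ, ∃ j : ℕ, M.Adj (Sum.inl n) (Sum.inr j) := by
      intro n
      obtain ⟨w, hw, -⟩ := hM (hA ⟨n, rfl⟩)
      cases w with
      | inl m => exact absurd (M.adj_sub hw) not_adj_ll
      | inr j => exact ⟨j, hw⟩
    choose f hf using partner
    have hflt : ∀ n, 2 ≤ n → f n < n := by
      intro n hn
      have := M.adj_sub (hf n)
      rcases this with h | h
      · omega
      · exact h
    have hinj : Function.Injective f := by
      intro a b hab
      have h1 := hf a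
      have h2 := hf b
      rw [hab] at h1
      have hmem : Sum.inr (f b) ∈ M.verts := M.edge_vert h1.symm
      have := (hM hmem).unique h1.symm h2.symm
      exact Sum.inl_injective this
    set N := max (f 0) (f 1) + 2 with hN
    have hmap : ∀ n ∈ Finset.range (N + 1), f n ∈ Finset.range N := by
      intro n hn
      simp only [Finset.mem_range] at *
      rcases Nat.lt_or_ge n 2 with h' | h'
      · interval_cases n <;> omega
      · have := hflt n h'
        omega
    have hcard := Finset.card_le_card_of_injOn f hmap (hinj.injOn)
    simp [Finset.card_range] at hcard
end
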